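/- arXiv:2105.02529 — 2 statements merged into one kernel-verified Lean document; each statement's English description precedes it below -/
import Mathlib

section
/- If X ⊆ A^ℤ is an infinite transitive subshift, then the cellular automaton F_X on the star-studded subshift X* has all directions sensitive; that is, for all coprime integers p, q with q > 0, the map σ^p ∘ F_X^q is sensitive (has no blocking word). -/
namespace Paper

variable {A B C : Type*}

def shiftMap (x : ℤ → A) : ℤ → A := fun i => x (i + 1)

def shiftInvMap (x : ℤ → A) : ℤ → A := fun i => x (i - 1)

/-- A subshift: nonempty, shift-invariant (both directions), and closed
(expressed combinatorially: any configuration all of whose central patterns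
are approximated by members is a member). -/
def IsSubshift (X : Set (ℤ → A)) : Prop :=
  X.Nonempty ∧ (∀ x ∈ X, shiftMap x ∈ X) ∧ (∀ x ∈ X, shiftInvMap x ∈ X) ∧
  ∀ x : ℤ → A, (∀ n : ℕ, ∃ y ∈ X, ∀ i : ℤ, |i| ≤ (n : ℤ) → y i = x i) → x ∈ X

/-- The word `x[i, i+k-1]`. -/
def cfgWord (x : ℤ → A) (i : ℤ) (k : ℕ) : List A :=
  List.ofFn (fun t : Fin k => x (i + ((t : ℕ) : ℤ)))

/-- The language of a set of configurations. -/
def lang (X : Set (ℤ → A)) : Set (List A) := {w | ∃ x ∈ X, ∃ i : ℤ, cfgWord x i w.length = w}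

def TransitiveShift (X : Set (ℤ → A)) : Prop :=
  ∀ u ∈ lang X, ∀ v ∈ lang X, ∃ w : List A, u ++ w ++ v ∈ lang X

/-- Left ray of a configuration: `leftRay x n = x (-1-n)`. -/
def leftRay (x : ℤ → A) : ℕ → A := fun n => x (-1 - (n : ℤ))

def rightRay (x : ℤ → A) : ℕ → A := fun n => x (n : ℤ)

def LeftRays (X : Set (ℤ → A)) : Set (ℕ → A) := leftRay '' X

def RightRays (X : Set (ℤ → A)) : Set (ℕ → A) := rightRay '' X

/-- Glue a left ray and a right ray into a configuration. -/
def glue (l r : ℕ → A) : ℤ → A := fun i => if 0 ≤ i then r i.toNat else l (-1 - i).toNat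

/-- Follower set of a left-infinite sequence. -/
def foll (X : Set (ℤ → A)) (l : ℕ → A) : Set (ℕ → A) := {r | glue l r ∈ X}

def wordThen (w : List A) (r : ℕ → A) : ℕ → A :=
  fun n => if h : n < w.length then w.get ⟨n, h⟩ else r (n - w.length)

/-- Follower set of a word. -/
def follW (X : Set (ℤ → A)) (w : List A) : Set (ℕ → A) := {r | wordThen w r ∈ RightRays X}

def occursInLeft (l : ℕ → A) (w : List A) : Prop :=
  ∃ j : ℕ, ∀ k : Fin w.length, l (j + (w.length - 1 - (k : ℕ))) = w.get k

/-- The language of a left-infinite sequence. -/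
def langL (l : ℕ → A) : Set (List A) := {w | occursInLeft l w}

/-- The left ray `l` ends with the word `w`. -/
def raySuffix (l : ℕ → A) (w : List A) : Prop :=
  ∀ k : Fin w.length, l (w.length - 1 - (k : ℕ)) = w.get k

def HalfSyncWord (X : Set (ℤ → A)) (w : List A) : Prop :=
  w ∈ lang X ∧ ∃ l ∈ LeftRays X, raySuffix l w ∧ langL l = lang X ∧ foll X l = follW X w

def HalfSynchronized (X : Set (ℤ → A)) : Prop := TransitiveShift X ∧ ∃ w, HalfSyncWord X w

def SyncWord (X : Set (ℤ → A)) (w : List A) : Prop :=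
  w ∈ lang X ∧ ∀ l ∈ LeftRays X, raySuffix l w → foll X l = follW X w

def Synchronized (X : Set (ℤ → A)) : Prop := TransitiveShift X ∧ ∃ w, SyncWord X w

/-- Product of two subshifts, over the product alphabet. -/
def prodShift (Y : Set (ℤ → B)) (Z : Set (ℤ → C)) : Set (ℤ → B × C) :=
  {x | (fun i => (x i).1) ∈ Y ∧ (fun i => (x i).2) ∈ Z}

/-- Identification of a pair of sets of right rays with a set of right rays
over the product alphabet. -/
def prodRaySet (S : Set (ℕ → B)) (T : Set (ℕ → C)) : Set (ℕ → B × C) :=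
  {r | (fun n => (r n).1) ∈ S ∧ (fun n => (r n).2) ∈ T}

/-- Extend a left ray by one more symbol on the right. -/
def extendRay (l : ℕ → A) (a : A) : ℕ → A := fun n => if n = 0 then a else l (n - 1)

/-- Edge of the Krieger graph from `u` to `v` labeled `a`. -/
def KEdge (X : Set (ℤ → A)) (u : Set (ℕ → A)) (a : A) (v : Set (ℕ → A)) : Prop :=
  ∃ l ∈ LeftRays X, extendRay l a ∈ LeftRays X ∧ u = foll X l ∧ v = foll X (extendRay l a)

def KStep (X : Set (ℤ → A)) (u v : Set (ℕ → A)) : Prop := ∃ a, KEdge X u a v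

/-- Existence of a finite path in the Krieger graph. -/
def KReach (X : Set (ℤ → A)) : Set (ℕ → A) → Set (ℕ → A) → Prop :=
  Relation.ReflTransGen (KStep X)

def KVertex (X : Set (ℤ → A)) (v : Set (ℕ → A)) : Prop := ∃ l ∈ LeftRays X, v = foll X l

/-- A subshift is sofic iff it has finitely many follower sets. -/
def Sofic (X : Set (ℤ → A)) : Prop := {v : Set (ℕ → A) | KVertex X v}.Finite

/-- Vertex of the Fischer graph (w.r.t. half-synchronizing word `w`): a vertex of the
Krieger graph in the maximal strongly connected subgraph containing `foll w`. -/
def FVertex (X : Set (ℤ → A)) (w : List A) (v : Set (ℕ → A)) : Prop :=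
  KVertex X v ∧ KReach X (follW X w) v ∧ KReach X v (follW X w)

/-- Directed (multi)graph with vertex type `V` and edge type `E`. -/
structure DiGraph (V : Type*) (E : Type*) where
  ini : E → V
  ter : E → V

variable {V E V' E' : Type*}

/-- Bi-infinite path on a graph. -/
def BiPath (G : DiGraph V E) (x : ℤ → E) : Prop := ∀ i : ℤ, G.ter (x i) = G.ini (x (i + 1))

/-- `p` is a finite path of `m+1` edges. -/
def FinPath (G : DiGraph V E) (m : ℕ) (p : Fin (m + 1) → E) : Prop :=
  ∀ k : Fin m, G.ter (p k.castSucc) = G.ini (p k.succ)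

/-- The subpath `x[i, i+n]` of a bi-infinite path is a shortest path between its endpoints. -/
def GeodesicSeg (G : DiGraph V E) (x : ℤ → E) (i : ℤ) (n : ℕ) : Prop :=
  ∀ (m : ℕ) (p : Fin (m + 1) → E), FinPath G m p →
    G.ini (p 0) = G.ini (x i) → G.ter (p (Fin.last m)) = G.ter (x (i + (n : ℤ))) → n ≤ m

def EvGeodesic (G : DiGraph V E) (x : ℤ → E) : Prop :=
  ∃ i₀ : ℤ, ∀ i : ℤ, i₀ ≤ i → ∀ n : ℕ, GeodesicSeg G x i n

/-- Strictly proximal pair of bi-infinite paths. -/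
def StrictProxPair (x y : ℤ → E) : Prop :=
  (∀ n : ℕ, ∃ i : ℕ, ∀ k : ℕ, k ≤ n → x ((i : ℤ) + (k : ℤ)) = y ((i : ℤ) + (k : ℤ))) ∧
  ∀ N : ℕ, ∃ i : ℕ, N ≤ i ∧ x ((i : ℕ) : ℤ) ≠ y ((i : ℕ) : ℤ)

def HasEvGeoProxPair (G : DiGraph V E) : Prop :=
  ∃ x y : ℤ → E, BiPath G x ∧ BiPath G y ∧ EvGeodesic G x ∧ EvGeodesic G y ∧ StrictProxPair x y

/-- Edges of the Fischer graph: Krieger edges between Fischer vertices. -/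
def FischerE (X : Set (ℤ → A)) (w : List A) : Type _ :=
  {t : Set (ℕ → A) × A × Set (ℕ → A) //
    FVertex X w t.1 ∧ FVertex X w t.2.2 ∧ KEdge X t.1 t.2.1 t.2.2}

def FischerGraph (X : Set (ℤ → A)) (w : List A) : DiGraph (Set (ℕ → A)) (FischerE X w) :=
  ⟨fun e => e.1.1, fun e => e.1.2.2⟩

def SlidingBlockCode (X : Set (ℤ → A)) (F : (ℤ → A) → (ℤ → B)) : Prop :=
  ∃ (r : ℕ) (f : (Fin (2 * r + 1) → A) → B),
    ∀ x ∈ X, ∀ i : ℤ, F x i = f (fun k => x (i + ((k : ℕ) : ℤ) - (r : ℤ)))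

def ShiftConjugate (X : Set (ℤ → A)) (Y : Set (ℤ → B)) : Prop :=
  ∃ F : (ℤ → A) → (ℤ → B), SlidingBlockCode X F ∧ Set.InjOn F X ∧ F '' X = Y

def DirectPrime (X : Set (ℤ → A)) : Prop :=
  ∀ (B C : Type) (_ : Finite B) (_ : Finite C) (Y : Set (ℤ → B)) (Z : Set (ℤ → C)),
    IsSubshift Y → IsSubshift Z → ShiftConjugate X (prodShift Y Z) →
    (∃ y, Y = {y}) ∨ (∃ z, Z = {z})

/-- The star-studded version of a subshift: configurations of `X` with `*` (here `none`)
interleaved so that no two consecutive `*` occur. -/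
def starShift (X : Set (ℤ → A)) : Set (ℤ → Option A) :=
  {x | (∀ i : ℤ, ¬ (x i = none ∧ x (i + 1) = none)) ∧
       ∀ (i : ℤ) (k : ℕ), (cfgWord x i k).reduceOption ∈ lang X}

/-- The reversible CA `F_X` on the star-studded subshift. -/
def starCA (x : ℤ → Option A) : ℤ → Option A := fun i =>
  match x i, x (i + 1) with
  | none, _ => none
  | some _, none => x (i + 2)
  | some _, some b => some b

/-- `G` is a radius-`r` CA on `X`. -/
def IsRadiusCA (X : Set (ℤ → A)) (G : (ℤ → A) → (ℤ → A)) (r : ℕ) : Prop :=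
  ∃ f : (Fin (2 * r + 1) → A) → A,
    ∀ x ∈ X, ∀ i : ℤ, G x i = f (fun k => x (i + ((k : ℕ) : ℤ) - (r : ℤ)))

/-- `w` is a blocking word for the radius-`r` CA `G` on `X`. -/
def BlockingWord (X : Set (ℤ → A)) (G : (ℤ → A) → (ℤ → A)) (r : ℕ) (w : List A) : Prop :=
  ∃ e pp : ℕ, e ≤ w.length ∧ r + 1 ≤ e ∧ pp + e ≤ w.length ∧
    ∀ x ∈ X, ∀ y ∈ X, cfgWord x 0 w.length = w → cfgWord y 0 w.length = w →
      ∀ (m k : ℕ), k < e →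
        (G^[m] x) ((pp : ℤ) + (k : ℤ)) = (G^[m] y) ((pp : ℤ) + (k : ℤ))

/-- A CA on a transitive subshift is sensitive iff it has no blocking word. -/
def SensitiveCA (X : Set (ℤ → A)) (G : (ℤ → A) → (ℤ → A)) : Prop :=
  ¬ ∃ (r : ℕ) (w : List A), IsRadiusCA X G r ∧ w ∈ lang X ∧ BlockingWord X G r w

section Aux

variable {A : Type*}

lemma cfg_len (x : ℤ → A) (i : ℤ) (L : ℕ) : (cfgWord x i L).length = L := by
  simp [cfgWord]

lemma cfg_get (x : ℤ → A) (i : ℤ) {L t : ℕ} (h : t < L) :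
    (cfgWord x i L)[t]'(by simpa [cfg_len] using h) = x (i + t) := by
  simp [cfgWord]

lemma cfg_get? (x : ℤ → A) (i : ℤ) {L t : ℕ} (h : t < L) :
    (cfgWord x i L)[t]? = some (x (i + t)) := by
  rw [List.getElem?_eq_getElem (by simpa [cfg_len] using h)]
  rw [cfg_get x i h]

lemma cfg_of_eq {x : ℤ → A} {i : ℤ} {L : ℕ} {v : List A} (heq : cfgWord x i L = v)
    {t : ℕ} (h : t < L) : v[t]? = some (x (i + t)) := by
  rw [← heq]; exact cfg_get? x i h

lemma cfg_build {x : ℤ → A} {i : ℤ} {v : List A} {L : ℕ} (hlen : v.length = L)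
    (h : ∀ t : ℕ, t < L → v[t]? = some (x (i + t))) : cfgWord x i L = v := by
  apply List.ext_getElem?
  intro t
  by_cases ht : t < L
  · rw [cfg_get? x i ht, h t ht]
  · rw [List.getElem?_eq_none (by simpa [cfg_len] using Nat.le_of_not_lt ht),
      List.getElem?_eq_none (by omega)]

lemma cfg_shift (x : ℤ → A) (c i : ℤ) (L : ℕ) :
    cfgWord (fun k => x (k + c)) i L = cfgWord x (i + c) L := by
  apply cfg_build (cfg_len _ _ _)
  intro t ht
  rw [cfg_get? _ _ ht]
  congr 2
  ring

lemma cfg_append (x : ℤ → A) (i : ℤ) (a b : ℕ) :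
    cfgWord x i (a + b) = cfgWord x i a ++ cfgWord x (i + a) b := by
  apply cfg_build (by simp [cfg_len])
  intro t ht
  by_cases h : t < a
  · rw [List.getElem?_append_left (by simpa [cfg_len] using h), cfg_get? _ _ h]
  · rw [List.getElem?_append_right (by simpa [cfg_len] using Nat.le_of_not_lt h)]
    rw [cfg_len, cfg_get? _ _ (by omega)]
    congr 2
    push_cast
    omega

/-- X is closed under arbitrary integer shifts. -/
lemma mem_shift {X : Set (ℤ → A)} (hX : IsSubshift X) {x : ℤ → A} (hx : x ∈ X) (c : ℤ) :
    (fun k => x (k + c)) ∈ X := by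
  induction c using Int.induction_on with
  | zero => simpa using hx
  | succ n ih =>
      have := hX.2.1 _ ih
      have he : shiftMap (fun k => x (k + n)) = fun k => x (k + (n + 1)) := by
        funext k; simp only [shiftMap]; congr 1; ring
      rwa [he] at this
  | pred n ih =>
      have := hX.2.2.1 _ ih
      have he : shiftInvMap (fun k => x (k + (-n))) = fun k => x (k + (-n - 1)) := by
        funext k; simp only [shiftInvMap]; congr 1; ring
      rwa [he] at this

end Aux
section Aux2

variable {A : Type*}

def NoSS (x : ℤ → Option A) : Prop := ∀ i : ℤ, ¬ (x i = none ∧ x (i + 1) = none)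

def Struct (z : ℤ → A) (θ : ℤ → ℤ) (x : ℤ → Option A) : Prop :=
  (∀ k : ℤ, x k = none → θ (k + 1) = θ k) ∧
  (∀ (k : ℤ) (a : A), x k = some a → θ (k + 1) = θ k + 1 ∧ a = z (θ k))

lemma starCA_none {x : ℤ → Option A} {i : ℤ} (h : x i = none) : starCA x i = none := by
  simp [starCA, h]

lemma starCA_ss {x : ℤ → Option A} {i : ℤ} {a b : A} (h : x i = some a)
    (h1 : x (i + 1) = some b) : starCA x i = some b := by
  simp [starCA, h, h1]

lemma starCA_sn {x : ℤ → Option A} {i : ℤ} {a : A} (h : x i = some a)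
    (h1 : x (i + 1) = none) : starCA x i = x (i + 2) := by
  simp [starCA, h, h1]

lemma noss_next {x : ℤ → Option A} (hN : NoSS x) {i : ℤ} (h : x i = none) :
    ∃ b, x (i + 1) = some b := by
  have := hN i
  cases hx : x (i + 1) with
  | none => exact absurd ⟨h, hx⟩ this
  | some b => exact ⟨b, rfl⟩

lemma star_none_iff {x : ℤ → Option A} (hN : NoSS x) (i : ℤ) :
    starCA x i = none ↔ x i = none := by
  constructor
  · intro h
    by_contra hne
    obtain ⟨a, ha⟩ := Option.ne_none_iff_exists'.mp hne
    cases h1 : x (i + 1) with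
    | some b => rw [starCA_ss ha h1] at h; exact Option.some_ne_none _ h
    | none =>
        rw [starCA_sn ha h1] at h
        obtain ⟨b, hb⟩ := noss_next hN h1
        rw [show i + 1 + 1 = i + 2 by ring] at hb
        rw [hb] at h; exact Option.some_ne_none _ h
  · exact starCA_none

lemma noss_star {x : ℤ → Option A} (hN : NoSS x) : NoSS (starCA x) := by
  intro i ⟨h0, h1⟩
  exact hN i ⟨(star_none_iff hN i).mp h0, (star_none_iff hN (i + 1)).mp h1⟩

lemma struct_star {x : ℤ → Option A} {z : ℤ → A} {θ : ℤ → ℤ} (hN : NoSS x)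
    (hS : Struct z θ x) : Struct (fun n => z (n + 1)) θ (starCA x) := by
  constructor
  · intro k h
    exact hS.1 k ((star_none_iff hN k).mp h)
  · intro k a ha
    have hne : starCA x k ≠ none := by rw [ha]; exact Option.some_ne_none _
    have hkne : x k ≠ none := fun h => hne (starCA_none h)
    obtain ⟨c, hc⟩ := Option.ne_none_iff_exists'.mp hkne
    have hstep := (hS.2 k c hc).1
    refine ⟨hstep, ?_⟩
    · cases h1 : x (k + 1) with
      | some b =>
          rw [starCA_ss hc h1] at ha
          have hba : a = b := (Option.some_injective _ ha).symm
          have hb := (hS.2 (k + 1) b h1).2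
          rw [hstep] at hb
          show a = z (θ k + 1)
          rw [hba, hb]
      | none =>
          rw [starCA_sn hc h1] at ha
          have ha2 : x (k + 1 + 1) = some a := by rw [show k + 1 + 1 = k + 2 by ring, ha]
          have := (hS.2 (k + 1 + 1) a ha2).2
          rw [hS.1 (k + 1) h1, hstep] at this
          show a = z (θ k + 1)
          exact this

lemma struct_congr {x : ℤ → Option A} {z z' : ℤ → A} {θ : ℤ → ℤ}
    (h : ∀ n, z n = z' n) (hS : Struct z θ x) : Struct z' θ x :=
  ⟨hS.1, fun k a ha => ⟨(hS.2 k a ha).1, by rw [(hS.2 k a ha).2, h]⟩⟩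

lemma struct_iter {x : ℤ → Option A} {z : ℤ → A} {θ : ℤ → ℤ} (hN : NoSS x)
    (hS : Struct z θ x) (m : ℕ) :
    NoSS (starCA^[m] x) ∧ Struct (fun n => z (n + m)) θ (starCA^[m] x) ∧
      ∀ i, (starCA^[m] x i = none ↔ x i = none) := by
  induction m with
  | zero => exact ⟨hN, struct_congr (fun n => by norm_num) hS, fun i => by simp⟩
  | succ m ih =>
      obtain ⟨ihN, ihS, ihst⟩ := ih
      refine ⟨?_, ?_, ?_⟩
      · rw [Function.iterate_succ_apply']; exact noss_star ihN
      · rw [Function.iterate_succ_apply']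
        refine struct_congr (fun n => ?_) (struct_star ihN ihS)
        show z (n + 1 + (m : ℤ)) = z (n + ((m + 1 : ℕ) : ℤ))
        congr 1
        push_cast
        ring
      · intro i
        rw [Function.iterate_succ_apply', star_none_iff ihN i]
        exact ihst i

lemma theta_mono {x : ℤ → Option A} {z : ℤ → A} {θ : ℤ → ℤ} (hS : Struct z θ x)
    (i : ℤ) (L : ℕ) : θ i ≤ θ (i + L) ∧ θ (i + L) ≤ θ i + L := by
  induction L with
  | zero => simp
  | succ L ih =>
      have harg : i + ((L : ℕ) + 1 : ℕ) = (i + L) + 1 := by push_cast; ring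
      rw [harg]
      cases hx : x (i + L) with
      | none => rw [hS.1 _ hx]; push_cast; omega
      | some a => rw [(hS.2 _ a hx).1]; push_cast; omega

lemma cfg_snoc (x : ℤ → A) (i : ℤ) (L : ℕ) :
    cfgWord x i (L + 1) = cfgWord x i L ++ [x (i + L)] := by
  apply cfg_build (by simp [cfg_len])
  intro t ht
  by_cases h : t < L
  · rw [List.getElem?_append_left (by simpa [cfg_len] using h), cfg_get? _ _ h]
  · obtain rfl : t = L := by omega
    rw [List.getElem?_append_right (by simp [cfg_len]), cfg_len]
    simp

lemma struct_reduce {x : ℤ → Option A} {z : ℤ → A} {θ : ℤ → ℤ} (hS : Struct z θ x)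
    (i : ℤ) (L : ℕ) :
    (cfgWord x i L).reduceOption = cfgWord z (θ i) (θ (i + L) - θ i).toNat := by
  induction L with
  | zero => simp [cfgWord]
  | succ L ih =>
      rw [cfg_snoc, List.reduceOption_append, ih]
      have hmono := theta_mono hS i L
      have harg : i + ((L : ℕ) + 1 : ℕ) = (i + L) + 1 := by push_cast; ring
      cases hx : x (i + L) with
      | none =>
          rw [harg, hS.1 _ hx]
          simp
      | some a =>
          rw [harg, (hS.2 _ a hx).1]
          have hn : (θ (i + L) + 1 - θ i).toNat = (θ (i + L) - θ i).toNat + 1 := by omega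
          rw [hn, cfg_snoc]
          simp only [List.reduceOption_cons_of_some, List.reduceOption_nil]
          congr 2
          exact ((hS.2 _ a hx).2).trans (by congr 1; omega)

lemma struct_mem {X : Set (ℤ → A)} {x : ℤ → Option A} {z : ℤ → A} {θ : ℤ → ℤ}
    (hz : z ∈ X) (hN : NoSS x) (hS : Struct z θ x) : x ∈ starShift X := by
  constructor
  · exact hN
  · intro i k
    rw [struct_reduce hS i k]
    exact ⟨z, hz, θ i, by rw [cfg_len]⟩

end Aux2
section Aux3

variable {A : Type*}

lemma reduce_idx : ∀ (w : List (Option A)) (n : ℕ) (a : A), w[n]? = some (some a) →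
    w.reduceOption[((w.take n).reduceOption.length)]? = some a := by
  intro w
  induction w with
  | nil => intro n a h; simp at h
  | cons c w' ih =>
      intro n a h
      cases n with
      | zero =>
          simp only [List.getElem?_cons_zero, Option.some_inj] at h
          subst h
          simp
      | succ n =>
          simp only [List.getElem?_cons_succ] at h
          cases c with
          | none => simpa using ih n a h
          | some b => simpa using ih n a h

lemma take_red_none {w : List (Option A)} {n : ℕ} (h : w[n]? = some none) :
    (w.take (n + 1)).reduceOption.length = (w.take n).reduceOption.length := by
  rw [List.take_succ, h]
  simp [List.reduceOption_append]

lemma take_red_some {w : List (Option A)} {n : ℕ} {a : A} (h : w[n]? = some (some a)) :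
    (w.take (n + 1)).reduceOption.length = (w.take n).reduceOption.length + 1 := by
  rw [List.take_succ, h]
  simp [List.reduceOption_append]

lemma star_shift (y : ℤ → Option A) (c : ℤ) :
    starCA (fun j => y (j + c)) = fun i => starCA y (i + c) := by
  funext i
  show (match y (i + c), y (i + 1 + c) with
    | none, _ => none
    | some _, none => y (i + 2 + c)
    | some _, some b => some b) = starCA y (i + c)
  rw [show i + 1 + c = i + c + 1 by ring, show i + 2 + c = i + c + 2 by ring]
  rfl

lemma star_shift_iter (n : ℕ) (y : ℤ → Option A) (c : ℤ) :
    starCA^[n] (fun j => y (j + c)) = fun i => starCA^[n] y (i + c) := by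
  induction n generalizing y with
  | zero => simp
  | succ n ih =>
      rw [Function.iterate_succ_apply, Function.iterate_succ_apply, star_shift, ih]

lemma iterG (p : ℤ) (q : ℕ) (m : ℕ) (x : ℤ → Option A) (i : ℤ) :
    (fun (x : ℤ → Option A) i => starCA^[q] x (i + p))^[m] x i
      = starCA^[q * m] x (i + p * m) := by
  induction m generalizing x i with
  | zero => simp
  | succ m ih =>
      rw [Function.iterate_succ_apply]
      show (fun (x : ℤ → Option A) i => starCA^[q] x (i + p))^[m]
        (fun j => starCA^[q] x (j + p)) i = _
      rw [ih, star_shift_iter, ← Function.iterate_add_apply]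
      show starCA^[q * m + q] x (i + p * (m : ℤ) + p) = _
      have h1 : q * m + q = q * (m + 1) := by ring
      have h2 : i + p * (m : ℤ) + p = i + p * ((m : ℕ) + 1 : ℕ) := by push_cast; ring
      rw [h1, h2]

lemma pigeon {X : Set (ℤ → A)} (hinf : X.Infinite) (K : ℕ) :
    ∃ (L : ℕ) (vs : Fin (K + 1) → List A), Function.Injective vs ∧
      ∀ i, vs i ∈ lang X ∧ (vs i).length = L := by
  classical
  obtain f := hinf.natEmbedding
  let g : Fin (K + 1) → (ℤ → A) := fun i => (f i.val : ℤ → A)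
  have hgmem : ∀ i, g i ∈ X := fun i => (f i.val).2
  have hginj : Function.Injective g := by
    intro i j hij
    have : f i.val = f j.val := Subtype.ext hij
    exact Fin.val_injective (f.injective this)
  let c : Fin (K + 1) × Fin (K + 1) → ℤ := fun pr =>
    if h : g pr.1 ≠ g pr.2 then Classical.choose (Function.ne_iff.mp h) else 0
  have hc : ∀ pr : Fin (K + 1) × Fin (K + 1), g pr.1 ≠ g pr.2 →
      g pr.1 (c pr) ≠ g pr.2 (c pr) := by
    intro pr h
    simp only [c, dif_pos h]
    exact Classical.choose_spec (Function.ne_iff.mp h)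
  let N : ℕ := Finset.sup Finset.univ (fun pr : Fin (K + 1) × Fin (K + 1) => (c pr).natAbs)
  refine ⟨2 * N + 1, fun i => cfgWord (g i) (-(N : ℤ)) (2 * N + 1), ?_, ?_⟩
  · intro i j hij
    by_contra hne
    have hgne : g i ≠ g j := fun h => hne (hginj h)
    have hcne := hc (i, j) hgne
    have hN : (c (i, j)).natAbs ≤ N := Finset.le_sup (f := fun pr : Fin (K + 1) × Fin (K + 1) => (c pr).natAbs) (Finset.mem_univ (i, j))
    set cc := c (i, j) with hcc
    have ht : (cc + N).toNat < 2 * N + 1 := by omega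
    have := cfg_of_eq hij ht
    rw [cfg_get? _ _ ht] at this
    have harg : -(N : ℤ) + ((cc + N).toNat : ℕ) = cc := by omega
    rw [harg] at this
    exact hcne (Option.some_injective _ this.symm)
  · intro i
    exact ⟨⟨g i, hgmem i, -(N : ℤ), by rw [cfg_len]⟩, cfg_len _ _ _⟩

end Aux3
section Aux4

variable {A : Type*}

/-- canonical position-to-content map for a configuration built from word `w` and tail `z`. -/
def th0 (w : List (Option A)) : ℤ → ℤ := fun k =>
  if k < 0 then k
  else if k ≤ (w.length : ℤ) then ((w.take k.toNat).reduceOption.length : ℤ)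
  else (w.reduceOption.length : ℤ) + (k - w.length)

/-- canonical configuration: `w` on `[0, |w|)`, flat copy of `z` elsewhere. -/
def xc (w : List (Option A)) (z : ℤ → A) : ℤ → Option A := fun k =>
  if 0 ≤ k ∧ k < (w.length : ℤ) then (w[k.toNat]?).getD none else some (z (th0 w k))

lemma th0_nonneg_nat (w : List (Option A)) (n : ℕ) (hn : n ≤ w.length) :
    th0 w (n : ℤ) = ((w.take n).reduceOption.length : ℤ) := by
  simp only [th0]
  rw [if_neg (by omega), if_pos (by omega)]
  simp

lemma xc_in (w : List (Option A)) (z : ℤ → A) (n : ℕ) (hn : n < w.length) :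
    xc w z (n : ℤ) = w[n]'hn := by
  simp only [xc]
  rw [if_pos (by constructor <;> omega)]
  rw [List.getElem?_eq_getElem (by omega)]
  simp only [Option.getD_some]
  simp

lemma xc_out (w : List (Option A)) (z : ℤ → A) (k : ℤ) (hk : ¬(0 ≤ k ∧ k < (w.length : ℤ))) :
    xc w z k = some (z (th0 w k)) := by
  simp only [xc]
  rw [if_neg hk]

lemma struct_xc (w : List (Option A)) (z : ℤ → A)
    (hz : cfgWord z 0 w.reduceOption.length = w.reduceOption) :
    Struct z (th0 w) (xc w z) := by
  have hgen : ∀ k : ℤ, (xc w z k = none → th0 w (k + 1) = th0 w k) ∧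
      (∀ a : A, xc w z k = some a → th0 w (k + 1) = th0 w k + 1 ∧ a = z (th0 w k)) := by
    intro k
    by_cases h : 0 ≤ k ∧ k < (w.length : ℤ)
    · set n := k.toNat with hn
      have hkn : k = (n : ℤ) := by omega
      have hnlt : n < w.length := by omega
      have hxc := xc_in w z n hnlt
      rw [← hkn] at hxc
      have hth : th0 w k = ((w.take n).reduceOption.length : ℤ) := by
        rw [hkn]; exact th0_nonneg_nat w n (by omega)
      have hth1 : th0 w (k + 1) = ((w.take (n + 1)).reduceOption.length : ℤ) := by
        rw [hkn, show ((n : ℤ) + 1) = ((n + 1 : ℕ) : ℤ) by push_cast; ring]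
        exact th0_nonneg_nat w (n + 1) (by omega)
      have hget : w[n]? = some (w[n]'hnlt) := List.getElem?_eq_getElem hnlt
      constructor
      · intro hnone
        rw [hxc] at hnone
        rw [hth, hth1, take_red_none (by rw [hget, hnone])]
      · intro a ha
        rw [hxc] at ha
        have hsome : w[n]? = some (some a) := by rw [hget, ha]
        constructor
        · rw [hth, hth1, take_red_some hsome]; push_cast; ring
        · have hidx := reduce_idx w n a hsome
          have hlt : (w.take n).reduceOption.length < w.reduceOption.length := by
            rcases List.getElem?_eq_some_iff.mp hidx with ⟨hh, _⟩
            exact hh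
          have := cfg_of_eq hz hlt
          rw [hidx] at this
          have := Option.some_injective _ this
          rw [this, hth]
          congr 1
          omega
    · constructor
      · intro hnone
        rw [xc_out w z k h] at hnone
        exact absurd hnone (Option.some_ne_none _)
      · intro a ha
        rw [xc_out w z k h] at ha
        have hval : a = z (th0 w k) := (Option.some_injective _ ha).symm
        refine ⟨?_, hval⟩
        by_cases hk0 : k < 0
        · by_cases hk1 : k + 1 < 0
          · simp only [th0]; rw [if_pos hk1, if_pos hk0]
          · have hk1' : k = -1 := by omega
            subst hk1'
            simp only [th0]
            norm_num
        · have hkge : (w.length : ℤ) ≤ k := by omega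
          by_cases hkeq : k = (w.length : ℤ)
          · subst hkeq
            have e1 : th0 w ((w.length : ℤ) + 1) = (w.reduceOption.length : ℤ) + 1 := by
              simp only [th0]
              rw [if_neg (by omega), if_neg (by omega)]
              ring
            have e2 : th0 w ((w.length : ℤ)) = (w.reduceOption.length : ℤ) := by
              rw [th0_nonneg_nat w w.length le_rfl, List.take_length]
            rw [e1, e2]
          · simp only [th0]
            rw [if_neg (by omega), if_neg (by omega), if_neg (by omega), if_neg (by omega)]
            ring
  exact ⟨fun k => (hgen k).1, fun k a => (hgen k).2 a⟩

lemma noss_xc (w : List (Option A)) (z : ℤ → A)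
    (hno2 : ∀ n : ℕ, n + 1 < w.length → ¬(w[n]? = some none ∧ w[n + 1]? = some none)) :
    NoSS (xc w z) := by
  intro k ⟨h0, h1⟩
  by_cases h : 0 ≤ k ∧ k < (w.length : ℤ)
  · set n := k.toNat with hn
    have hkn : k = (n : ℤ) := by omega
    have hnlt : n < w.length := by omega
    rw [hkn, xc_in w z n hnlt] at h0
    by_cases h2 : n + 1 < w.length
    · have : k + 1 = ((n + 1 : ℕ) : ℤ) := by omega
      rw [this, xc_in w z (n + 1) h2] at h1
      exact hno2 n h2 ⟨by rw [List.getElem?_eq_getElem hnlt, h0],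
        by rw [List.getElem?_eq_getElem h2, h1]⟩
    · have : ¬(0 ≤ k + 1 ∧ k + 1 < (w.length : ℤ)) := by omega
      rw [xc_out w z (k + 1) this] at h1
      exact Option.some_ne_none _ h1
  · rw [xc_out w z k h] at h0
    exact Option.some_ne_none _ h0

lemma cfg_xc (w : List (Option A)) (z : ℤ → A) :
    cfgWord (xc w z) 0 w.length = w := by
  apply cfg_build rfl
  intro t ht
  rw [zero_add, xc_in w z t ht]
  exact List.getElem?_eq_getElem ht

/-- insert a star at position `t`, shifting everything at `≥ t` to the right. -/
def insX (t : ℤ) (x : ℤ → Option A) : ℤ → Option A :=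
  fun k => if k = t then none else if k < t then x k else x (k - 1)

def insTh (t : ℤ) (θ : ℤ → ℤ) : ℤ → ℤ := fun k => if k ≤ t then θ k else θ (k - 1)

lemma struct_insX {x : ℤ → Option A} {z : ℤ → A} {θ : ℤ → ℤ} (t : ℤ)
    (hS : Struct z θ x) : Struct z (insTh t θ) (insX t x) := by
  constructor
  · intro k hk
    simp only [insX] at hk
    simp only [insTh]
    by_cases h1 : k = t
    · subst h1
      rw [if_neg (by omega), if_pos le_rfl]
      congr 1
      ring
    · rw [if_neg h1] at hk
      by_cases h2 : k < t
      · rw [if_pos h2] at hk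
        rw [if_pos (by omega), if_pos (by omega)]
        exact hS.1 k hk
      · rw [if_neg h2] at hk
        rw [if_neg (by omega), if_neg (by omega)]
        have := hS.1 (k - 1) hk
        rw [show k - 1 + 1 = k by ring] at this
        rw [show k + 1 - 1 = k by ring, this]
  · intro k a ha
    simp only [insX] at ha
    simp only [insTh]
    by_cases h1 : k = t
    · rw [if_pos h1] at ha; exact absurd ha (by simp)
    · rw [if_neg h1] at ha
      by_cases h2 : k < t
      · rw [if_pos h2] at ha
        have := hS.2 k a ha
        rw [if_pos (by omega), if_pos (by omega)]
        exact this
      · rw [if_neg h2] at ha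
        have := hS.2 (k - 1) a ha
        rw [show k - 1 + 1 = k by ring] at this
        rw [if_neg (by omega), if_neg (by omega), show k + 1 - 1 = k by ring]
        exact this

lemma noss_insX {x : ℤ → Option A} (t : ℤ) (hN : NoSS x)
    (h1 : x (t - 1) ≠ none) (h2 : x t ≠ none) : NoSS (insX t x) := by
  intro k ⟨hk0, hk1⟩
  simp only [insX] at hk0 hk1
  by_cases e1 : k = t
  · subst e1
    rw [if_neg (by omega), if_neg (by omega), show k + 1 - 1 = k by ring] at hk1
    exact h2 hk1
  · rw [if_neg e1] at hk0
    by_cases e2 : k + 1 = t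
    · rw [if_pos (by omega)] at hk0
      exact h1 (by rw [show t - 1 = k by omega]; exact hk0)
    · rw [if_neg e2] at hk1
      by_cases e3 : k < t
      · rw [if_pos e3] at hk0
        rw [if_pos (by omega)] at hk1
        exact hN k ⟨hk0, hk1⟩
      · rw [if_neg (by omega)] at hk0
        rw [if_neg (by omega)] at hk1
        refine hN (k - 1) ⟨hk0, ?_⟩
        rw [show k - 1 + 1 = k + 1 - 1 by ring]
        exact hk1

/-- insert a star at position `t`, shifting everything at `≤ t` to the left. -/
def insXL (t : ℤ) (x : ℤ → Option A) : ℤ → Option A :=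
  fun k => if k = t then none else if k > t then x k else x (k + 1)

def insThL (t : ℤ) (θ : ℤ → ℤ) : ℤ → ℤ := fun k => if k > t then θ k else θ (k + 1)

lemma struct_insXL {x : ℤ → Option A} {z : ℤ → A} {θ : ℤ → ℤ} (t : ℤ)
    (hS : Struct z θ x) : Struct z (insThL t θ) (insXL t x) := by
  constructor
  · intro k hk
    simp only [insXL] at hk
    simp only [insThL]
    by_cases h1 : k = t
    · subst h1
      rw [if_pos (by omega), if_neg (by omega)]
    · rw [if_neg h1] at hk
      by_cases h2 : k > t
      · rw [if_pos h2] at hk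
        rw [if_pos (by omega), if_pos (by omega)]
        exact hS.1 k hk
      · rw [if_neg (by omega)] at hk
        rw [if_neg (by omega), if_neg (by omega)]
        have := hS.1 (k + 1) hk
        rw [show k + 1 + 1 = k + 1 + 1 by ring] at this
        exact this
  · intro k a ha
    simp only [insXL] at ha
    simp only [insThL]
    by_cases h1 : k = t
    · rw [if_pos h1] at ha; exact absurd ha (by simp)
    · rw [if_neg h1] at ha
      by_cases h2 : k > t
      · rw [if_pos h2] at ha
        rw [if_pos (by omega), if_pos (by omega)]
        exact hS.2 k a ha
      · rw [if_neg (by omega)] at ha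
        rw [if_neg (by omega), if_neg (by omega)]
        exact hS.2 (k + 1) a ha

lemma noss_insXL {x : ℤ → Option A} (t : ℤ) (hN : NoSS x)
    (h1 : x t ≠ none) (h2 : x (t + 1) ≠ none) : NoSS (insXL t x) := by
  intro k ⟨hk0, hk1⟩
  simp only [insXL] at hk0 hk1
  by_cases e1 : k = t
  · subst e1
    rw [if_neg (by omega), if_pos (by omega)] at hk1
    exact h2 hk1
  · rw [if_neg e1] at hk0
    by_cases e2 : k + 1 = t
    · rw [if_neg (by omega)] at hk0
      exact h1 (by rw [show t = k + 1 by omega]; exact hk0)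
    · rw [if_neg e2] at hk1
      by_cases e3 : k > t
      · rw [if_pos e3] at hk0
        rw [if_pos (by omega)] at hk1
        exact hN k ⟨hk0, hk1⟩
      · rw [if_neg (by omega)] at hk0
        rw [if_neg (by omega)] at hk1
        refine hN (k + 1) ⟨hk0, ?_⟩
        rw [show k + 1 + 1 = k + 1 + 1 by ring]
        exact hk1

end Aux4
section Aux5

variable {A : Type*}

lemma lang_base {X : Set (ℤ → A)} (hX : IsSubshift X) {v : List A} (hv : v ∈ lang X) :
    ∃ z ∈ X, cfgWord z 0 v.length = v := by
  obtain ⟨z0, hz0, i, hcfg⟩ := hv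
  refine ⟨fun k => z0 (k + i), mem_shift hX hz0 i, ?_⟩
  rw [cfg_shift, zero_add, hcfg]

lemma star_word_facts {X : Set (ℤ → A)} {w : List (Option A)} (hw : w ∈ lang (starShift X)) :
    (∀ n : ℕ, n + 1 < w.length → ¬(w[n]? = some none ∧ w[n + 1]? = some none)) ∧
    w.reduceOption ∈ lang X := by
  obtain ⟨x0, ⟨hP, hlang⟩, i0, hcfg⟩ := hw
  constructor
  · rintro n hn ⟨h0, h1⟩
    have e0 := cfg_of_eq hcfg (show n < w.length by omega)
    have e1 := cfg_of_eq hcfg hn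
    rw [h0] at e0
    rw [h1] at e1
    refine hP (i0 + n) ⟨(Option.some_injective _ e0).symm, ?_⟩
    have : i0 + (n : ℤ) + 1 = i0 + ((n + 1 : ℕ) : ℤ) := by push_cast; ring
    rw [this]
    exact (Option.some_injective _ e1).symm
  · have := hlang i0 w.length
    rwa [hcfg] at this

lemma occ {X : Set (ℤ → A)} (hX : IsSubshift X) (ht : TransitiveShift X) {u v : List A}
    (hu : u ∈ lang X) (hv : v ∈ lang X) :
    ∃ z ∈ X, cfgWord z 0 u.length = u ∧
      ∃ s : ℕ, cfgWord z ((u.length : ℤ) + s) v.length = v := by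
  obtain ⟨s, hs⟩ := ht u hu v hv
  obtain ⟨z, hz, hcfg⟩ := lang_base hX hs
  have hlen : (u ++ s ++ v).length = u.length + s.length + v.length := by
    simp [List.length_append]
    ring
  refine ⟨z, hz, ?_, s.length, ?_⟩
  · apply cfg_build rfl
    intro t htl
    have := cfg_of_eq hcfg (show t < (u ++ s ++ v).length by omega)
    rw [← this, List.append_assoc, List.getElem?_append_left (by omega)]
  · apply cfg_build rfl
    intro t htl
    have hidx : u.length + s.length + t < (u ++ s ++ v).length := by omega
    have := cfg_of_eq hcfg hidx
    have harg : (0 : ℤ) + ((u.length + s.length + t : ℕ) : ℤ)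
        = (u.length : ℤ) + (s.length : ℕ) + (t : ℕ) := by push_cast; ring
    rw [harg] at this
    rw [← this, List.getElem?_append_right (by simp only [List.length_append]; omega)]
    congr 1
    simp only [List.length_append]
    omega

/-- flat (star-free) configuration of a point of `X`. -/
lemma flat_struct (z : ℤ → A) : Struct z id (fun k => (some (z k) : Option A)) :=
  ⟨fun k h => absurd h (Option.some_ne_none _),
   fun k a ha => ⟨rfl, (Option.some_injective _ ha).symm⟩⟩

lemma flat_noss (z : ℤ → A) : NoSS (fun k => (some (z k) : Option A)) :=
  fun i h => Option.some_ne_none _ h.1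

lemma flat_mem {X : Set (ℤ → A)} {z : ℤ → A} (hz : z ∈ X) :
    (fun k => (some (z k) : Option A)) ∈ starShift X :=
  struct_mem hz (flat_noss z) (flat_struct z)

end Aux5
theorem stmt17 [Finite A] (X : Set (ℤ → A)) (hX : IsSubshift X) (hinf : X.Infinite)
    (ht : TransitiveShift X) (p : ℤ) (q : ℕ) (hq : 0 < q)
    (hcop : Int.gcd p (q : ℤ) = 1) :
    SensitiveCA (starShift X) (fun x i => (starCA^[q] x) (i + p)) := by
  classical
  rintro ⟨r, w, hrad, hw, e, pp, he1, he2, he3, hblock⟩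
  obtain ⟨hno2, hu⟩ := star_word_facts hw
  obtain ⟨z, hzX, hzu⟩ := lang_base hX hu
  have hSz := struct_xc w z hzu
  have hNz := noss_xc w z hno2
  have hmem := struct_mem hzX hNz hSz
  have hcfg0 := cfg_xc w z
  have he0 : 0 < e := by omega
  rcases lt_trichotomy p 0 with hp | hp | hp
  · -- p < 0 : insert a star far to the left
    set m : ℕ := pp + 2 with hm
    set t : ℤ := ((pp : ℕ) : ℤ) + ((0 : ℕ) : ℤ) + p * ((m : ℕ) : ℤ) with htdef
    have hmz : ((m : ℕ) : ℤ) = (pp : ℤ) + 2 := by rw [hm]; push_cast; ring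
    have hpm : p * ((m : ℕ) : ℤ) ≤ -1 * ((m : ℕ) : ℤ) :=
      mul_le_mul_of_nonneg_right (by omega) (by positivity)
    have ht2 : t ≤ -2 := by
      rw [htdef]
      simp only [Nat.cast_zero]
      linarith [hpm, hmz]
    have hxnt : xc w z t ≠ none := by
      rw [xc_out w z t (by omega)]; exact Option.some_ne_none _
    have hxnt1 : xc w z (t + 1) ≠ none := by
      rw [xc_out w z (t + 1) (by omega)]; exact Option.some_ne_none _
    set y := insXL t (xc w z) with hy
    have hSy := struct_insXL t hSz
    have hNy := noss_insXL t hNz hxnt hxnt1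
    have hmemy := struct_mem hzX hNy hSy
    have hcfgy : cfgWord y 0 w.length = w := by
      apply cfg_build rfl
      intro s hs
      have hval : y (0 + (s : ℤ)) = xc w z (0 + (s : ℤ)) := by
        simp only [hy, insXL]
        rw [if_neg (by omega), if_pos (by omega)]
      rw [hval]
      exact cfg_of_eq hcfg0 hs
    have heq := hblock (xc w z) hmem y hmemy hcfg0 hcfgy m 0 he0
    rw [iterG, iterG] at heq
    rw [← htdef] at heq
    have hynone : y t = none := by simp [hy, insXL]
    have e1 := (struct_iter hNz hSz (q * m)).2.2 t
    have e2 := (struct_iter hNy hSy (q * m)).2.2 t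
    have hcontr : xc w z t = none := e1.mp (heq.trans (e2.mpr hynone))
    rw [xc_out w z t (by omega)] at hcontr
    exact Option.some_ne_none _ hcontr
  · -- p = 0 (hence q = 1)
    subst hp
    have hq1 : q = 1 := by
      rw [Int.gcd_zero_left, Int.natAbs_natCast] at hcop
      exact hcop
    subst hq1
    by_cases hr : r = 0
    · -- radius 0 is impossible
      subst hr
      obtain ⟨f, hf⟩ := hrad
      have FU : ∀ z1, z1 ∈ X → ∀ z2, z2 ∈ X → ∀ i1 i2 : ℤ,
          z1 i1 = z2 i2 → z1 (i1 + 1) = z2 (i2 + 1) := by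
        intro z1 h1 z2 h2 i1 i2 hval
        have m1 := hf _ (flat_mem h1) i1
        have m2 := hf _ (flat_mem h2) i2
        have hargs : (fun k : Fin (2 * 0 + 1) =>
              (fun k' => (some (z1 k') : Option A)) (i1 + ((k : ℕ) : ℤ) - ((0 : ℕ) : ℤ)))
            = (fun k : Fin (2 * 0 + 1) =>
              (fun k' => (some (z2 k') : Option A)) (i2 + ((k : ℕ) : ℤ) - ((0 : ℕ) : ℤ))) := by
          funext k
          have hk0 : (k : ℕ) = 0 := by omega
          simp only [hk0]
          norm_num
          exact hval
        rw [hargs] at m1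
        have hmm := m1.trans m2.symm
        simp only [Function.iterate_one, add_zero] at hmm
        have c1 : starCA (fun k => (some (z1 k) : Option A)) i1 = some (z1 (i1 + 1)) :=
          starCA_ss rfl rfl
        have c2 : starCA (fun k => (some (z2 k) : Option A)) i2 = some (z2 (i2 + 1)) :=
          starCA_ss rfl rfl
        rw [c1, c2] at hmm
        exact Option.some_injective _ hmm
      -- word determinism: a word of the language is determined by its first letter
      have WD : ∀ v1 v2 : List A, v1 ∈ lang X → v2 ∈ lang X → v1.length = v2.length →
          v1[0]? = v2[0]? → v1 = v2 := by
        intro v1 v2 hv1 hv2 hlen hhead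
        obtain ⟨x1, hx1, P1, hc1⟩ := hv1
        obtain ⟨x2, hx2, P2, hc2⟩ := hv2
        have key : ∀ t, t < v1.length → x1 (P1 + t) = x2 (P2 + t) := by
          intro t
          induction t with
          | zero =>
              intro h0
              have e1 := cfg_of_eq hc1 h0
              have e2 := cfg_of_eq hc2 (show 0 < v2.length by omega)
              rw [e1, e2] at hhead
              exact Option.some_injective _ hhead
          | succ t iht =>
              intro hst
              have := FU x1 hx1 x2 hx2 (P1 + t) (P2 + t) (iht (by omega))
              have a1 : P1 + ((t + 1 : ℕ) : ℤ) = P1 + (t : ℕ) + 1 := by push_cast; ring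
              have a2 : P2 + ((t + 1 : ℕ) : ℤ) = P2 + (t : ℕ) + 1 := by push_cast; ring
              rw [a1, a2]
              exact this
        apply List.ext_getElem?
        intro n
        by_cases hn : n < v1.length
        · rw [cfg_of_eq hc1 hn, cfg_of_eq hc2 (show n < v2.length by omega), key n hn]
        · rw [List.getElem?_eq_none (show v1.length ≤ n by omega),
            List.getElem?_eq_none (show v2.length ≤ n by omega)]
      -- pigeonhole with K = |A|
      have : Nonempty A := by
        obtain ⟨x0, hx0⟩ := hX.1
        exact ⟨x0 0⟩
      have hfin := Fintype.ofFinite A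
      obtain ⟨L, vs, hinj, hvs⟩ := pigeon hinf (Fintype.card A)
      have hA1 : 1 ≤ Fintype.card A := Fintype.card_pos
      cases L with
      | zero =>
          have h01 : vs 0 = vs 1 := by
            have l0 : (vs 0).length = 0 := (hvs 0).2
            have l1 : (vs 1).length = 0 := (hvs 1).2
            rw [List.length_eq_zero_iff] at l0 l1
            rw [l0, l1]
          have := hinj h01
          have : (0 : Fin (Fintype.card A + 1)).val = (1 : Fin (Fintype.card A + 1)).val := by
            rw [this]
          simp [Fin.val_zero, Fin.val_one] at this
      | succ L' =>
          have hL : ∀ i, 0 < (vs i).length := fun i => by rw [(hvs i).2]; omega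
          have hphi : Function.Injective
              (fun i : Fin (Fintype.card A + 1) => (vs i)[0]'(hL i)) := by
            intro i i' hii
            have hii' : (vs i)[0]'(hL i) = (vs i')[0]'(hL i') := hii
            apply hinj
            apply WD _ _ (hvs i).1 (hvs i').1 (by rw [(hvs i).2, (hvs i').2])
            rw [List.getElem?_eq_getElem (hL i), List.getElem?_eq_getElem (hL i'), hii']
          have := Fintype.card_le_of_injective _ hphi
          simp at this
    · -- r ≥ 1, so e ≥ 2 : find a non-star cell in the window
      obtain ⟨kk, a, hkk, ha⟩ : ∃ (kk : ℕ) (a : A), kk < e ∧ w[pp + kk]? = some (some a) := by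
        have hpplt : pp < w.length := by omega
        have hg0 : w[pp]? = some (w[pp]'hpplt) := List.getElem?_eq_getElem hpplt
        cases hc0 : w[pp]'hpplt with
        | some a => exact ⟨0, a, by omega, by rw [Nat.add_zero, hg0, hc0]⟩
        | none =>
            have hpp1 : pp + 1 < w.length := by omega
            have hg1 : w[pp + 1]? = some (w[pp + 1]'hpp1) := List.getElem?_eq_getElem hpp1
            cases hc1 : w[pp + 1]'hpp1 with
            | none => exact absurd ⟨by rw [hg0, hc0], by rw [hg1, hc1]⟩ (hno2 pp hpp1)
            | some a => exact ⟨1, a, by omega, by rw [hg1, hc1]⟩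
      set j : ℕ := pp + kk with hj
      have hjlt : j < w.length := by omega
      set d : ℕ := (w.take j).reduceOption.length with hdd
      have hd : w.reduceOption[d]? = some a := reduce_idx w j a ha
      have hdlt : d < w.reduceOption.length := by
        by_contra h
        rw [List.getElem?_eq_none (by omega)] at hd
        exact Option.some_ne_none _ hd.symm
      -- value of iterates at the window cell
      have VAL : ∀ z1 : ℤ → A, cfgWord z1 0 w.reduceOption.length = w.reduceOption →
          ∀ m : ℕ, starCA^[m] (xc w z1) ((j : ℕ) : ℤ) = some (z1 ((d : ℤ) + m)) := by
        intro z1 hz1 m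
        have hS1 := struct_xc w z1 hz1
        have hN1 := noss_xc w z1 hno2
        obtain ⟨_, hSm, hstat⟩ := struct_iter hN1 hS1 m
        have hxj : xc w z1 ((j : ℕ) : ℤ) = some a := by
          rw [xc_in w z1 j hjlt]
          exact Option.some_injective _ ((List.getElem?_eq_getElem hjlt).symm.trans ha)
        have hne : starCA^[m] (xc w z1) ((j : ℕ) : ℤ) ≠ none := by
          intro h
          have := (hstat ((j : ℕ) : ℤ)).mp h
          rw [hxj] at this
          exact Option.some_ne_none _ this
        obtain ⟨b, hb⟩ := Option.ne_none_iff_exists'.mp hne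
        have hval := (hSm.2 _ b hb).2
        rw [hb]
        have : b = z1 (th0 w ((j : ℕ) : ℤ) + m) := hval
        rw [this]
        congr 1
        rw [th0_nonneg_nat w j (le_of_lt hjlt), hdd]
      -- uniqueness of the tail
      have UNIQ : ∀ z1, z1 ∈ X → cfgWord z1 0 w.reduceOption.length = w.reduceOption →
          ∀ m : ℕ, z1 ((d : ℤ) + m) = z ((d : ℤ) + m) := by
        intro z1 hz1X hz1 m
        have hmem1 := struct_mem hz1X (noss_xc w z1 hno2) (struct_xc w z1 hz1)
        have heq := hblock (xc w z1) hmem1 (xc w z) hmem (cfg_xc w z1) hcfg0 m kk hkk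
        rw [iterG, iterG] at heq
        simp only [one_mul, zero_mul, add_zero] at heq
        have hjpos : ((pp : ℕ) : ℤ) + ((kk : ℕ) : ℤ) = ((j : ℕ) : ℤ) := by
          rw [hj]; push_cast; ring
        rw [hjpos, VAL z1 hz1 m, VAL z hzu m] at heq
        exact Option.some_injective _ heq
      -- every word of the language occurs along z after position d
      have OCC2 : ∀ v : List A, v ∈ lang X →
          ∃ s : ℕ, cfgWord z ((w.reduceOption.length : ℤ) + s) v.length = v := by
        intro v hv
        obtain ⟨z1, hz1X, hz1u, s, hz1v⟩ := occ hX ht hu hv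
        refine ⟨s, cfg_build rfl ?_⟩
        intro t htl
        rw [cfg_of_eq hz1v htl]
        congr 1
        have harg : (w.reduceOption.length : ℤ) + (s : ℕ) + (t : ℕ)
            = (d : ℤ) + ((w.reduceOption.length - d + s + t : ℕ) : ℤ) := by push_cast; omega
        rw [harg]
        exact UNIQ z1 hz1X hz1u _
      -- eventual periodicity
      obtain ⟨s0, hs0⟩ := OCC2 w.reduceOption hu
      set D : ℕ := w.reduceOption.length + s0 with hD
      have hz2X : (fun k => z (k + ((D : ℕ) : ℤ))) ∈ X := mem_shift hX hzX D
      have hz2u : cfgWord (fun k => z (k + ((D : ℕ) : ℤ))) 0 w.reduceOption.length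
          = w.reduceOption := by
        rw [cfg_shift, zero_add]
        have : ((D : ℕ) : ℤ) = (w.reduceOption.length : ℤ) + (s0 : ℕ) := by
          rw [hD]; push_cast; ring
        rw [this]
        exact hs0
      have PER : ∀ n : ℕ, z ((d : ℤ) + n + ((D : ℕ) : ℤ)) = z ((d : ℤ) + n) := by
        intro n
        exact UNIQ _ hz2X hz2u n
      -- low complexity
      have CPLX : ∀ v : List A, v ∈ lang X → ∃ t0 : ℕ, t0 < D ∧
          ∀ t, t < v.length → v[t]? = some (z ((d : ℤ) + ((t0 + t : ℕ) : ℤ))) := by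
        intro v hv
        obtain ⟨s, hsv⟩ := OCC2 v hv
        have hstart : ∀ t, t < v.length →
            v[t]? = some (z ((d : ℤ) + (((w.reduceOption.length - d + s) + t : ℕ) : ℤ))) := by
          intro t htl
          rw [cfg_of_eq hsv htl]
          congr 2
          push_cast
          omega
        have red : ∀ m0 : ℕ,
            (∀ t, t < v.length → v[t]? = some (z ((d : ℤ) + ((m0 + t : ℕ) : ℤ)))) →
            ∃ t0 : ℕ, t0 < D ∧
              ∀ t, t < v.length → v[t]? = some (z ((d : ℤ) + ((t0 + t : ℕ) : ℤ))) := by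
          intro m0
          induction m0 using Nat.strong_induction_on with
          | _ m0 ih =>
            intro hprop
            by_cases hm : m0 < D
            · exact ⟨m0, hm, hprop⟩
            · refine ih (m0 - D) (by omega) ?_
              intro t htl
              rw [hprop t htl]
              congr 1
              have hper := PER (m0 - D + t)
              have harg : (d : ℤ) + ((m0 + t : ℕ) : ℤ)
                  = (d : ℤ) + ((m0 - D + t : ℕ) : ℤ) + ((D : ℕ) : ℤ) := by push_cast; omega
              rw [harg, hper]
        exact red _ hstart
      -- pigeonhole
      obtain ⟨L, vs, hinj, hvs⟩ := pigeon hinf D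
      have hphi : ∀ i : Fin (D + 1), ∃ t0, t0 < D ∧
          ∀ t, t < L → (vs i)[t]? = some (z ((d : ℤ) + ((t0 + t : ℕ) : ℤ))) := by
        intro i
        obtain ⟨t0, h1, h2⟩ := CPLX (vs i) (hvs i).1
        exact ⟨t0, h1, fun t htl => h2 t (by rw [(hvs i).2]; exact htl)⟩
      choose t0f ht0lt ht0 using hphi
      have hinj2 : Function.Injective
          (fun i : Fin (D + 1) => (⟨t0f i, ht0lt i⟩ : Fin D)) := by
        intro i i' hii
        have htt : t0f i = t0f i' := by simpa using hii
        apply hinj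
        apply List.ext_getElem?
        intro n
        by_cases hn : n < L
        · rw [ht0 i n hn, ht0 i' n hn, htt]
        · rw [List.getElem?_eq_none (by rw [(hvs i).2]; omega),
            List.getElem?_eq_none (by rw [(hvs i').2]; omega)]
      have := Fintype.card_le_of_injective _ hinj2
      simp at this
  · -- p > 0 : insert a star far to the right
    set m : ℕ := w.length + 1 with hm
    set t : ℤ := ((pp : ℕ) : ℤ) + ((0 : ℕ) : ℤ) + p * ((m : ℕ) : ℤ) with htdef
    have hmz : ((m : ℕ) : ℤ) = (w.length : ℤ) + 1 := by rw [hm]; push_cast; ring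
    have hpm : 1 * ((m : ℕ) : ℤ) ≤ p * ((m : ℕ) : ℤ) :=
      mul_le_mul_of_nonneg_right (by omega) (by positivity)
    have ht2 : (w.length : ℤ) + 1 ≤ t := by
      rw [htdef]
      simp only [Nat.cast_zero]
      linarith [hpm, hmz]
    have hxnt : xc w z t ≠ none := by
      rw [xc_out w z t (by omega)]; exact Option.some_ne_none _
    have hxnt1 : xc w z (t - 1) ≠ none := by
      rw [xc_out w z (t - 1) (by omega)]; exact Option.some_ne_none _
    set y := insX t (xc w z) with hy
    have hSy := struct_insX t hSz
    have hNy := noss_insX t hNz hxnt1 hxnt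
    have hmemy := struct_mem hzX hNy hSy
    have hcfgy : cfgWord y 0 w.length = w := by
      apply cfg_build rfl
      intro s hs
      have hval : y (0 + (s : ℤ)) = xc w z (0 + (s : ℤ)) := by
        simp only [hy, insX]
        rw [if_neg (by omega), if_pos (by omega)]
      rw [hval]
      exact cfg_of_eq hcfg0 hs
    have heq := hblock (xc w z) hmem y hmemy hcfg0 hcfgy m 0 he0
    rw [iterG, iterG] at heq
    rw [← htdef] at heq
    have hynone : y t = none := by simp [hy, insX]
    have e1 := (struct_iter hNz hSz (q * m)).2.2 t
    have e2 := (struct_iter hNy hSy (q * m)).2.2 t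
    have hcontr : xc w z t = none := e1.mp (heq.trans (e2.mpr hynone))
    rw [xc_out w z t (by omega)] at hcontr
    exact Option.some_ne_none _ hcontr

end Paper
end

section
/- If X is a half-synchronized subshift, then its star-studded version X* is half-synchronized, and any half-synchronizing word of X is also a half-synchronizing word of X*; moreover if X is synchronized then X* is synchronized, with any nonempty synchronizing word of X synchronizing for X*. -/
namespace Paper

variable {A B C : Type*}

variable {V E V' E' : Type*}

section Basic
variable {α : Type*} {Y : Set (ℤ → α)}

@[simp] lemma length_cfgWord (x : ℤ → α) (i : ℤ) (k : ℕ) : (cfgWord x i k).length = k := by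
  simp [cfgWord]

lemma cfgWord_getElem (x : ℤ → α) (i : ℤ) {k : ℕ} (t : ℕ) (ht : t < k) :
    (cfgWord x i k)[t]'(by simp [ht]) = x (i + t) := by
  simp [cfgWord]

lemma cfgWord_eq_ext {x y : ℤ → α} {i j : ℤ} {k : ℕ} (h : cfgWord x i k = cfgWord y j k) :
    ∀ t : ℕ, t < k → x (i + t) = y (j + t) := by
  intro t ht
  rw [← cfgWord_getElem x i t ht, ← cfgWord_getElem y j t ht]
  exact List.getElem_of_eq h _

lemma cfgWord_ext {x y : ℤ → α} {i j : ℤ} {k : ℕ}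
    (h : ∀ t : ℕ, t < k → x (i + t) = y (j + t)) : cfgWord x i k = cfgWord y j k := by
  apply List.ext_getElem (by simp)
  intro t h1 h2
  rw [cfgWord_getElem x i t (by simpa using h1), cfgWord_getElem y j t (by simpa using h2)]
  exact h t (by simpa using h1)

lemma cfgWord_add (x : ℤ → α) (i : ℤ) (m n : ℕ) :
    cfgWord x i (m + n) = cfgWord x i m ++ cfgWord x (i + m) n := by
  apply List.ext_getElem (by simp)
  intro t h1 h2
  rcases lt_or_ge t m with h | h
  · rw [List.getElem_append_left (by simpa using h)]
    rw [cfgWord_getElem x i t (by omega), cfgWord_getElem x i t h]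
  · rw [List.getElem_append_right (by simpa using h)]
    have h1' : t < m + n := by simpa using h1
    rw [cfgWord_getElem x i t h1']
    simp only [length_cfgWord]
    rw [cfgWord_getElem x (i+m) (t - m) (by omega)]
    congr 1
    omega

lemma shift_left_mem (hY : ∀ y ∈ Y, shiftMap y ∈ Y) {y : ℤ → α} (hy : y ∈ Y) (k : ℕ) :
    (fun i => y (i + k)) ∈ Y := by
  induction k with
  | zero => simpa using hy
  | succ n ih =>
      have h2 := hY _ ih
      have e : (fun i : ℤ => y (i + (n+1 : ℕ))) = shiftMap (fun i => y (i + n)) := by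
        funext i; simp only [shiftMap]; congr 1; push_cast; ring
      rw [e]; exact h2

lemma shift_right_mem (hY : ∀ y ∈ Y, shiftInvMap y ∈ Y) {y : ℤ → α} (hy : y ∈ Y) (k : ℕ) :
    (fun i => y (i - k)) ∈ Y := by
  induction k with
  | zero => simpa using hy
  | succ n ih =>
      have h2 := hY _ ih
      have e : (fun i : ℤ => y (i - (n+1 : ℕ))) = shiftInvMap (fun i => y (i - n)) := by
        funext i; simp only [shiftInvMap]; congr 1; push_cast; ring
      rw [e]; exact h2

lemma shift_int_mem (h1 : ∀ y ∈ Y, shiftMap y ∈ Y) (h2 : ∀ y ∈ Y, shiftInvMap y ∈ Y)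
    {y : ℤ → α} (hy : y ∈ Y) (m : ℤ) : (fun i => y (i + m)) ∈ Y := by
  rcases le_or_gt 0 m with h | h
  · have := shift_left_mem h1 hy m.toNat
    have e : (fun i : ℤ => y (i + m)) = fun i => y (i + m.toNat) := by
      funext i; congr 1; omega
    rw [e]; exact this
  · have := shift_right_mem h2 hy (-m).toNat
    have e : (fun i : ℤ => y (i + m)) = fun i => y (i - (-m).toNat) := by
      funext i; congr 1; omega
    rw [e]; exact this

lemma cfgWord_mem_lang {y : ℤ → α} (hy : y ∈ Y) (i : ℤ) (k : ℕ) : cfgWord y i k ∈ lang Y :=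
  ⟨y, hy, i, by simp⟩

lemma lang_infix {u v : List α} (huv : u <:+: v) (hv : v ∈ lang Y) : u ∈ lang Y := by
  obtain ⟨x, hx, i, hw⟩ := hv
  obtain ⟨s, t, hst⟩ := huv
  subst hst
  have hlen : (s ++ u ++ t).length = s.length + (u.length + t.length) := by simp; try ring
  rw [hlen] at hw
  rw [cfgWord_add, cfgWord_add] at hw
  rw [List.append_assoc] at hw
  have h1 := List.append_inj hw (by simp)
  have h2 := List.append_inj h1.2 (by simp)
  exact ⟨x, hx, i + s.length, h2.1⟩

lemma mem_of_forall_words (hY : IsSubshift Y) (x : ℤ → α)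
    (h : ∀ i k, cfgWord x i k ∈ lang Y) : x ∈ Y := by
  apply hY.2.2.2
  intro n
  obtain ⟨z, hz, j, hw⟩ := h (-(n:ℤ)) (2*n+1)
  rw [length_cfgWord] at hw
  refine ⟨fun i => z (i + (j + n)), shift_int_mem hY.2.1 hY.2.2.1 hz (j + n), ?_⟩
  intro i hi
  have hi' : -(n:ℤ) ≤ i ∧ i ≤ n := abs_le.mp hi
  have ht := cfgWord_eq_ext hw (i + n).toNat (by omega)
  have e1 : j + ((i + n).toNat : ℤ) = i + (j + n) := by omega
  have e2 : -(n:ℤ) + ((i + n).toNat : ℤ) = i := by omega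
  rw [e1, e2] at ht
  exact ht

end Basic


section Basic2
variable {α : Type*} {Y : Set (ℤ → α)}

lemma leftRay_glue (l r : ℕ → α) : leftRay (glue l r) = l := by
  funext n
  show glue l r (-1 - n) = l n
  rw [glue]
  rw [if_neg (by omega)]
  congr 1 <;> omega

lemma rightRay_glue (l r : ℕ → α) : rightRay (glue l r) = r := by
  funext n
  show glue l r n = r n
  rw [glue]
  rw [if_pos (by omega)]
  congr 1 <;> omega

lemma glue_eq_self (x : ℤ → α) : glue (leftRay x) (rightRay x) = x := by
  funext i
  rw [glue]
  split
  · next h =>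
      show x _ = x i
      congr 1 <;> omega
  · next h =>
      show x _ = x i
      congr 1 <;> omega

lemma mem_leftRays {x : ℤ → α} (hx : x ∈ Y) : leftRay x ∈ LeftRays Y := ⟨x, hx, rfl⟩

lemma foll_subset_follW (h1 : ∀ y ∈ Y, shiftMap y ∈ Y) (h2 : ∀ y ∈ Y, shiftInvMap y ∈ Y)
    {l : ℕ → α} {w : List α} (hsuf : raySuffix l w) : foll Y l ⊆ follW Y w := by
  intro r hr
  refine ⟨fun i => glue l r (i + -(w.length : ℤ)), shift_int_mem h1 h2 hr _, ?_⟩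
  funext n
  show glue l r ((n : ℤ) + -(w.length : ℤ)) = wordThen w r n
  rw [wordThen]
  split
  · next h =>
      rw [glue, if_neg (by omega)]
      have := hsuf ⟨n, h⟩
      simp only at this
      rw [← this]
      congr 1
      omega
  · next h =>
      rw [glue, if_pos (by omega)]
      congr 1
      omega

lemma follW_cons_subset (h1 : ∀ y ∈ Y, shiftMap y ∈ Y) (a : α) (w : List α) :
    follW Y (a :: w) ⊆ follW Y w := by
  rintro r ⟨y, hy, hray⟩
  refine ⟨shiftMap y, h1 _ hy, ?_⟩
  funext n
  show y ((n : ℤ) + 1) = wordThen w r n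
  have hn : y ((n+1 : ℕ) : ℤ) = wordThen (a :: w) r (n+1) := congrFun hray (n+1)
  push_cast at hn
  rw [hn, wordThen, wordThen]
  by_cases h : n < w.length
  · rw [dif_pos h, dif_pos (by simpa using Nat.succ_lt_succ h)]
    rfl
  · rw [dif_neg h, dif_neg (by simpa using fun hh => h (Nat.lt_of_succ_lt_succ hh))]
    congr 1
    simp only [List.length_cons]
    omega

lemma occursInLeft_leftRay {z : ℤ → α} {u : List α} (h : occursInLeft (leftRay z) u) :
    ∃ i, cfgWord z i u.length = u := by
  obtain ⟨j, hj⟩ := h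
  refine ⟨-((j : ℤ) + u.length), ?_⟩
  apply List.ext_getElem (by simp)
  intro t h1 h2
  rw [cfgWord_getElem _ _ t (by simpa using h1)]
  have := hj ⟨t, h2⟩
  simp only [leftRay, List.get_eq_getElem] at this
  rw [← this]
  congr 1
  omega

lemma langL_subset_lang {z : ℤ → α} (hz : z ∈ Y) : langL (leftRay z) ⊆ lang Y := by
  intro u hu
  obtain ⟨i, hi⟩ := occursInLeft_leftRay hu
  exact ⟨z, hz, i, hi⟩

lemma occursInLeft_infix {l : ℕ → α} {u v : List α} (huv : u <:+: v)
    (h : occursInLeft l v) : occursInLeft l u := by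
  obtain ⟨s, t, hst⟩ := huv
  subst hst
  obtain ⟨j, hj⟩ := h
  refine ⟨j + t.length, ?_⟩
  intro k
  have hk : (s.length + (k : ℕ)) < (s ++ u ++ t).length := by
    simp only [List.length_append]; omega
  have hthis : l (j + ((s ++ u ++ t).length - 1 - (s.length + (k : ℕ))))
      = (s ++ u ++ t)[s.length + (k : ℕ)]'hk := by
    simpa using hj ⟨s.length + k, hk⟩
  have hv : (s ++ u ++ t)[s.length + (k : ℕ)]'hk = u[(k : ℕ)]'k.isLt := by
    rw [List.getElem_append_left (by simp only [List.length_append]; omega)]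
    rw [List.getElem_append_right (by omega)]
    congr 1
    omega
  rw [hv] at hthis
  rw [List.get_eq_getElem]
  rw [← hthis]
  congr 1
  simp only [List.length_append]
  omega

lemma nil_mem_lang (hY : Y.Nonempty) : ([] : List α) ∈ lang Y := by
  obtain ⟨y, hy⟩ := hY
  exact ⟨y, hy, 0, by simp [cfgWord]⟩

/-- The length-`N` suffix of a left ray, as a word. -/
def sufW (l : ℕ → α) (N : ℕ) : List α := List.ofFn (fun k : Fin N => l (N - 1 - (k : ℕ)))

lemma occursInLeft_sufW (l : ℕ → α) (N : ℕ) : occursInLeft l (sufW l N) := by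
  refine ⟨0, fun k => ?_⟩
  show l (0 + ((List.ofFn (fun k : Fin N => l (N - 1 - (k : ℕ)))).length - 1 - (k : ℕ)))
      = (List.ofFn (fun k : Fin N => l (N - 1 - (k : ℕ)))).get k
  show _ = (List.ofFn (fun k : Fin N => l (N - 1 - (k : ℕ))))[(k : ℕ)]'(by simpa [sufW] using k.isLt)
  rw [List.getElem_ofFn]
  simp only [List.length_ofFn]
  congr 1 <;> simp

lemma sufW_length (l : ℕ → α) (N : ℕ) : (sufW l N).length = N := by simp [sufW]

end Basic2


section Star
variable {β : Type*}

/-- No two adjacent `none`s in a ray. -/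
def StarRay (r : ℕ → Option β) : Prop := ∀ n, ¬(r n = none ∧ r (n+1) = none)

/-- Positions of letters after inserting stars: gaps of 1 or 2. -/
def Embed (ψ : ℕ → ℕ) : Prop := ψ 0 ≤ 1 ∧ ∀ n, ψ (n+1) = ψ n + 1 ∨ ψ (n+1) = ψ n + 2

open Classical in
/-- The ray obtained from `s` by putting `s n` at position `ψ n` and `none` elsewhere. -/
noncomputable def starRay (s : ℕ → β) (ψ : ℕ → ℕ) : ℕ → Option β :=
  fun i => if h : ∃ n, ψ n = i then some (s h.choose) else none

lemma Embed.strictMono {ψ : ℕ → ℕ} (h : Embed ψ) : StrictMono ψ :=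
  strictMono_nat_of_lt_succ (fun n => by rcases h.2 n with h' | h' <;> omega)

lemma Embed.le_apply {ψ : ℕ → ℕ} (h : Embed ψ) (n : ℕ) : n ≤ ψ n :=
  h.strictMono.le_apply

lemma Embed.apply_le {ψ : ℕ → ℕ} (h : Embed ψ) (n : ℕ) : ψ n ≤ 2 * n + 1 := by
  induction n with
  | zero => exact h.1
  | succ m ih => rcases h.2 m with h' | h' <;> omega

lemma starRay_apply {s : ℕ → β} {ψ : ℕ → ℕ} (h : Embed ψ) (n : ℕ) :
    starRay s ψ (ψ n) = some (s n) := by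
  have hex : ∃ m, ψ m = ψ n := ⟨n, rfl⟩
  rw [starRay, dif_pos hex]
  exact congrArg (fun t => some (s t)) (h.strictMono.injective hex.choose_spec)

lemma starRay_eq_none {s : ℕ → β} {ψ : ℕ → ℕ} {i : ℕ} (hi : ∀ n, ψ n ≠ i) :
    starRay s ψ i = none := by
  rw [starRay, dif_neg (by push_neg; exact hi)]

lemma starRay_ne_none {s : ℕ → β} {ψ : ℕ → ℕ} {i : ℕ} (h : starRay s ψ i ≠ none) :
    ∃ n, ψ n = i := by
  by_contra hc
  push_neg at hc
  exact h (starRay_eq_none hc)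

lemma Embed.exists_between {ψ : ℕ → ℕ} (h : Embed ψ) {i : ℕ} (hi : ψ 0 ≤ i) :
    ∃ n, ψ n ≤ i ∧ i < ψ (n+1) := by
  classical
  have hex : ∃ n, i < ψ n := ⟨i+1, by have := h.le_apply (i+1); omega⟩
  have hN : i < ψ (Nat.find hex) := Nat.find_spec hex
  have hN0 : Nat.find hex ≠ 0 := by
    intro h0
    rw [h0] at hN
    omega
  obtain ⟨m, hm⟩ := Nat.exists_eq_succ_of_ne_zero hN0
  have hmlt : ¬ i < ψ m := Nat.find_min hex (by omega)
  rw [hm] at hN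
  exact ⟨m, by omega, hN⟩

lemma Embed.not_range_cases {ψ : ℕ → ℕ} (h : Embed ψ) {i : ℕ} (hi : ∀ n, ψ n ≠ i) :
    (i = 0 ∧ ψ 0 = 1) ∨ ∃ n, ψ (n+1) = ψ n + 2 ∧ i = ψ n + 1 := by
  rcases lt_or_ge i (ψ 0) with hlt | hge
  · left
    have := h.1
    omega
  · obtain ⟨n, h1, h2⟩ := h.exists_between hge
    right
    refine ⟨n, ?_⟩
    have hne := hi n
    rcases h.2 n with g | g
    · omega
    · exact ⟨g, by omega⟩

lemma Embed.not_range_between {ψ : ℕ → ℕ} (h : Embed ψ) {n i : ℕ}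
    (h1 : ψ n < i) (h2 : i < ψ (n+1)) : ∀ m, ψ m ≠ i := by
  intro m hm
  rcases lt_or_ge m (n+1) with hc | hc
  · have : ψ m ≤ ψ n := h.strictMono.monotone (by omega)
    omega
  · have : ψ (n+1) ≤ ψ m := h.strictMono.monotone hc
    omega

lemma StarRay_starRay {s : ℕ → β} {ψ : ℕ → ℕ} (h : Embed ψ) : StarRay (starRay s ψ) := by
  rintro i ⟨h1, h2⟩
  have c1 : ∀ n, ψ n ≠ i := fun n hn => by rw [← hn, starRay_apply h] at h1; exact (by simp at h1)
  have c2 : ∀ n, ψ n ≠ i + 1 := fun n hn => by rw [← hn, starRay_apply h] at h2; exact (by simp at h2)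
  rcases h.not_range_cases c1 with ⟨rfl, h0⟩ | ⟨n, hg, rfl⟩
  · exact c2 0 (by omega)
  · exact c2 (n+1) (by omega)

lemma StarRay.extract {r : ℕ → Option β} (h : StarRay r) :
    ∃ s ψ, Embed ψ ∧ r = starRay s ψ := by
  classical
  set ψ : ℕ → ℕ := fun n =>
    Nat.rec (if r 0 = none then 1 else 0) (fun _ p => if r (p+1) = none then p + 2 else p + 1) n
    with hψ
  have hψ0 : ψ 0 = if r 0 = none then 1 else 0 := rfl
  have hψs : ∀ n, ψ (n+1) = if r (ψ n + 1) = none then ψ n + 2 else ψ n + 1 := fun n => rfl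
  have hemb : Embed ψ := by
    constructor
    · rw [hψ0]; split <;> omega
    · intro n
      rw [hψs n]
      split
      · right; rfl
      · left; rfl
  have hsome : ∀ n, r (ψ n) ≠ none := by
    intro n
    induction n with
    | zero =>
        rw [hψ0]
        split
        · next hr0 => intro hc; exact h 0 ⟨hr0, hc⟩
        · next hr0 => exact hr0
    | succ m _ =>
        rw [hψs m]
        split
        · next hr => intro hc; exact h (ψ m + 1) ⟨hr, hc⟩
        · next hr => exact hr
  have hskip : ∀ n, ψ (n+1) = ψ n + 2 → r (ψ n + 1) = none := by
    intro n hg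
    by_cases hc : r (ψ n + 1) = none
    · exact hc
    · rw [hψs n, if_neg hc] at hg; omega
  have hzero : ψ 0 = 1 → r 0 = none := by
    intro h1
    rw [hψ0] at h1
    by_cases hc : r 0 = none
    · exact hc
    · rw [if_neg hc] at h1; omega
  obtain ⟨a₀, _⟩ : ∃ a, r (ψ 0) = some a := Option.ne_none_iff_exists'.mp (hsome 0)
  refine ⟨fun n => (r (ψ n)).getD a₀, ψ, hemb, ?_⟩
  funext i
  by_cases hc : ∃ n, ψ n = i
  · obtain ⟨n, rfl⟩ := hc
    rw [starRay_apply hemb]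
    obtain ⟨b, hb⟩ := Option.ne_none_iff_exists'.mp (hsome n)
    rw [hb]
    rfl
  · push_neg at hc
    rw [starRay_eq_none hc]
    rcases hemb.not_range_cases hc with ⟨rfl, h0⟩ | ⟨n, hg, rfl⟩
    · exact hzero h0
    · exact hskip n hg

lemma Embed.id_of_ne_none {s : ℕ → β} {ψ : ℕ → ℕ} (h : Embed ψ) {k : ℕ}
    (hk : ∀ n < k, starRay s ψ n ≠ none) : ∀ n < k, ψ n = n := by
  intro n hn
  induction n with
  | zero =>
      obtain ⟨m, hm⟩ := starRay_ne_none (hk 0 hn)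
      have : ψ 0 ≤ ψ m := h.strictMono.monotone (Nat.zero_le m)
      omega
  | succ p ih =>
      have hp := ih (by omega)
      obtain ⟨m, hm⟩ := starRay_ne_none (hk (p+1) hn)
      have hmgt : p < m := by
        by_contra hc
        push_neg at hc
        have : ψ m ≤ ψ p := h.strictMono.monotone hc
        omega
      have h1 : ψ (p+1) ≤ ψ m := h.strictMono.monotone hmgt
      rcases h.2 p with g | g <;> omega

/-- Words along a ray. -/
def rayWord (r : ℕ → β) (i k : ℕ) : List β := List.ofFn (fun t : Fin k => r (i + (t : ℕ)))

@[simp] lemma length_rayWord (r : ℕ → β) (i k : ℕ) : (rayWord r i k).length = k := by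
  simp [rayWord]

lemma rayWord_getElem (r : ℕ → β) (i : ℕ) {k : ℕ} (t : ℕ) (ht : t < k) :
    (rayWord r i k)[t]'(by simp [ht]) = r (i + t) := by
  simp [rayWord]

lemma rayWord_add (r : ℕ → β) (i m n : ℕ) :
    rayWord r i (m + n) = rayWord r i m ++ rayWord r (i + m) n := by
  apply List.ext_getElem (by simp)
  intro t h1 h2
  have h1' : t < m + n := by simpa using h1
  rcases lt_or_ge t m with hc | hc
  · rw [List.getElem_append_left (by simpa using hc)]
    rw [rayWord_getElem r i t h1', rayWord_getElem r i t hc]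
  · rw [List.getElem_append_right (by simpa using hc)]
    rw [rayWord_getElem r i t h1']
    simp only [length_rayWord]
    rw [rayWord_getElem r (i+m) (t - m) (by omega)]
    congr 1
    omega

lemma rayWord_one (r : ℕ → β) (i : ℕ) : rayWord r i 1 = [r i] := by
  simp [rayWord, List.ofFn_succ]

lemma reduceOption_map_some (t : List β) : (t.map some).reduceOption = t := by
  induction t with
  | nil => rfl
  | cons a l ih => simp [List.reduceOption_cons_of_some, ih]

lemma reduce_rayWord {s : ℕ → β} {ψ : ℕ → ℕ} (h : Embed ψ) (k : ℕ) :
    (rayWord (starRay s ψ) 0 (ψ k)).reduceOption = rayWord s 0 k := by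
  induction k with
  | zero =>
      have h0 := h.1
      interval_cases h' : ψ 0
      · simp [rayWord]
      · have : starRay s ψ 0 = none :=
          starRay_eq_none (fun n hn => by
            have : ψ 0 ≤ ψ n := h.strictMono.monotone (Nat.zero_le n)
            omega)
        rw [rayWord_one, this]
        simp [rayWord, List.reduceOption]
  | succ k ih =>
      have hgap : ψ (k+1) = ψ k + (ψ (k+1) - ψ k) := by
        have := h.strictMono (show k < k + 1 by omega)
        omega
      rw [hgap, rayWord_add, List.reduceOption_append, ih]
      have hR : rayWord s 0 (k + 1) = rayWord s 0 k ++ [s k] := by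
        rw [rayWord_add, rayWord_one]
        simp
      rw [hR]
      congr 1
      rcases h.2 k with g | g
      · rw [g]
        simp only [Nat.add_sub_cancel_left]
        rw [rayWord_one]
        simp only [Nat.zero_add]
        rw [starRay_apply h]
        simp [List.reduceOption]
      · rw [g]
        simp only [Nat.add_sub_cancel_left, Nat.zero_add]
        have h2 : rayWord (starRay s ψ) (ψ k) 2 = [starRay s ψ (ψ k), starRay s ψ (ψ k + 1)] := by
          have h21 : (2 : ℕ) = 1 + 1 := rfl
          rw [h21, rayWord_add, rayWord_one, rayWord_one]
          rfl
        rw [h2, starRay_apply h]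
        have : starRay s ψ (ψ k + 1) = none :=
          starRay_eq_none (h.not_range_between (n := k) (by omega) (by omega))
        rw [this]
        simp [List.reduceOption]

lemma reduceOption_reverse (u : List (Option β)) :
    u.reverse.reduceOption = u.reduceOption.reverse := by
  induction u with
  | nil => rfl
  | cons a l ih =>
      cases a <;> simp [List.reduceOption_append, ih, List.reduceOption]

lemma glue_word_split (L R : ℕ → β) (m m' : ℕ) :
    cfgWord (glue L R) (-(m : ℤ)) (m + m') = (rayWord L 0 m).reverse ++ rayWord R 0 m' := by
  apply List.ext_getElem (by simp)
  intro t h1 h2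
  have h1' : t < m + m' := by simpa using h1
  rw [cfgWord_getElem _ _ t h1']
  rcases lt_or_ge t m with hc | hc
  · rw [List.getElem_append_left (by simpa using hc)]
    rw [List.getElem_reverse]
    simp only [length_rayWord]
    rw [rayWord_getElem L 0 (m - 1 - t) (by omega)]
    rw [glue, if_neg (by omega)]
    congr 1
    omega
  · rw [List.getElem_append_right (by simpa using hc)]
    simp only [List.length_reverse, length_rayWord]
    rw [rayWord_getElem R 0 (t - m) (by omega)]
    rw [glue, if_pos (by omega)]
    congr 1
    omega

lemma master_identity {sl sr : ℕ → β} {ψl ψr : ℕ → ℕ} (hl : Embed ψl) (hr : Embed ψr)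
    (m m' : ℕ) :
    (cfgWord (glue (starRay sl ψl) (starRay sr ψr)) (-(ψl m : ℤ)) (ψl m + ψr m')).reduceOption
      = cfgWord (glue sl sr) (-(m : ℤ)) (m + m') := by
  rw [glue_word_split, glue_word_split, List.reduceOption_append, reduceOption_reverse,
    reduce_rayWord hl, reduce_rayWord hr]

lemma cfgWord_infix {α : Type*} (z : ℤ → α) {i : ℤ} {k : ℕ} {m m' : ℕ}
    (h1 : -(m : ℤ) ≤ i) (h2 : i + k ≤ (m' : ℤ)) :
    cfgWord z i k <:+: cfgWord z (-(m : ℤ)) (m + m') := by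
  have ha : m + m' = (i + m).toNat + (k + ((m + m') - (i + m).toNat - k)) := by omega
  rw [ha, cfgWord_add, cfgWord_add]
  have e1 : -(m : ℤ) + ((i + m).toNat : ℤ) = i := by omega
  rw [e1]
  exact ⟨cfgWord z (-(m:ℤ)) (i+m).toNat, cfgWord z (i + k) _, by rw [List.append_assoc]⟩

lemma reduceOption_infix {u v : List (Option β)} (h : u <:+: v) :
    u.reduceOption <:+: v.reduceOption := by
  obtain ⟨s, t, rfl⟩ := h
  exact ⟨s.reduceOption, t.reduceOption, by simp [List.reduceOption_append]⟩

end Star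


section StarShiftLemmas
variable {A : Type*} {X : Set (ℤ → A)}

lemma embed_id : Embed (id : ℕ → ℕ) := ⟨by simp, fun n => Or.inl rfl⟩

lemma starRay_id {β : Type*} (l : ℕ → β) : starRay l id = fun n => some (l n) :=
  funext fun i => starRay_apply embed_id i

lemma glue_starRay_mem (hX : IsSubshift X) {sl sr : ℕ → A} {ψl ψr : ℕ → ℕ}
    (hl : Embed ψl) (hr : Embed ψr)
    (hb : ψl 0 = 0 ∨ ψr 0 = 0) (hg : glue sl sr ∈ X) :
    glue (starRay sl ψl) (starRay sr ψr) ∈ starShift X := by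
  set L := starRay sl ψl with hLdef
  set R := starRay sr ψr with hRdef
  have hLs : StarRay L := StarRay_starRay (s := sl) hl
  have hRs : StarRay R := StarRay_starRay (s := sr) hr
  constructor
  · rintro i ⟨h1, h2⟩
    rcases lt_trichotomy i (-1) with hi | hi | hi
    · have e1 : glue L R i = L ((-2-i).toNat + 1) := by
        rw [glue, if_neg (by omega)]
        congr 1
        omega
      have e2 : glue L R (i+1) = L ((-2-i).toNat) := by
        rw [glue, if_neg (by omega)]
        congr 1
        omega
      exact hLs ((-2-i).toNat) ⟨by rw [← e2]; exact h2, by rw [← e1]; exact h1⟩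
    · subst hi
      have e1 : glue L R (-1) = L 0 := by
        rw [glue, if_neg (by omega)]
        norm_num
      have e2 : glue L R ((-1) + 1) = R 0 := by
        rw [glue, if_pos (by omega)]
        rfl
      rw [e1] at h1
      rw [e2] at h2
      rcases hb with hb | hb
      · rw [hLdef, ← hb, starRay_apply hl] at h1
        simp at h1
      · rw [hRdef, ← hb, starRay_apply hr] at h2
        simp at h2
    · have e1 : glue L R i = R i.toNat := by
        rw [glue, if_pos (by omega)]
      have e2 : glue L R (i+1) = R (i.toNat + 1) := by
        rw [glue, if_pos (by omega)]
        congr 1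
        omega
      exact hRs i.toNat ⟨by rw [← e1]; exact h1, by rw [← e2]; exact h2⟩
  · intro i k
    have hinf : cfgWord (glue L R) i k <:+:
        cfgWord (glue L R) (-(ψl (i.natAbs + k) : ℤ)) (ψl (i.natAbs + k) + ψr (i.natAbs + k)) := by
      apply cfgWord_infix
      · have := hl.le_apply (i.natAbs + k)
        omega
      · have := hr.le_apply (i.natAbs + k)
        omega
    have hred := reduceOption_infix hinf
    rw [master_identity hl hr] at hred
    exact lang_infix hred (cfgWord_mem_lang hg _ _)

lemma starShift_decompose {z : ℤ → Option A} (hX : IsSubshift X) (hz : z ∈ starShift X) :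
    ∃ sl ψl sr ψr, Embed ψl ∧ Embed ψr ∧ (ψl 0 = 0 ∨ ψr 0 = 0) ∧
      leftRay z = starRay sl ψl ∧ rightRay z = starRay sr ψr ∧ glue sl sr ∈ X := by
  have hL : StarRay (leftRay z) := by
    rintro n ⟨h1, h2⟩
    refine hz.1 (-2 - n) ⟨?_, ?_⟩
    · have e : (-2 - (n:ℤ)) = -1 - ((n+1 : ℕ) : ℤ) := by push_cast; ring
      rw [e]
      exact h2
    · have e : (-2 - (n:ℤ)) + 1 = -1 - (n : ℤ) := by ring
      rw [e]
      exact h1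
  have hR : StarRay (rightRay z) := by
    rintro n ⟨h1, h2⟩
    refine hz.1 n ⟨h1, ?_⟩
    have e : ((n:ℤ)) + 1 = ((n+1 : ℕ) : ℤ) := by push_cast; ring
    rw [e]
    exact h2
  obtain ⟨sl, ψl, hl, hLe⟩ := hL.extract
  obtain ⟨sr, ψr, hr, hRe⟩ := hR.extract
  refine ⟨sl, ψl, sr, ψr, hl, hr, ?_, hLe, hRe, ?_⟩
  · by_contra hc
    push_neg at hc
    have hl1 : ψl 0 = 1 := by have := hl.1; omega
    have hr1 : ψr 0 = 1 := by have := hr.1; omega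
    refine hz.1 (-1) ⟨?_, ?_⟩
    · have e : z (-1) = leftRay z 0 := by rw [leftRay]; norm_num
      rw [e, hLe]
      exact starRay_eq_none (fun n hn => by
        have := hl.strictMono.monotone (Nat.zero_le n); omega)
    · have e : (-1 : ℤ) + 1 = ((0:ℕ):ℤ) := by norm_num
      rw [e]
      show rightRay z 0 = none
      rw [hRe]
      exact starRay_eq_none (fun n hn => by
        have := hr.strictMono.monotone (Nat.zero_le n); omega)
  · apply mem_of_forall_words hX
    intro i k
    have hz2 := hz.2 (-(ψl (i.natAbs + k) : ℤ)) (ψl (i.natAbs + k) + ψr (i.natAbs + k))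
    have hzz : z = glue (starRay sl ψl) (starRay sr ψr) := by
      rw [← hLe, ← hRe, glue_eq_self]
    rw [hzz, master_identity hl hr] at hz2
    have hinf : cfgWord (glue sl sr) i k <:+:
        cfgWord (glue sl sr) (-((i.natAbs + k : ℕ):ℤ)) ((i.natAbs + k) + (i.natAbs + k)) := by
      apply cfgWord_infix <;> omega
    exact lang_infix hinf hz2

lemma cfgWord_one {α : Type*} (x : ℤ → α) (i : ℤ) : cfgWord x i 1 = [x i] := by
  simp [cfgWord, List.ofFn_succ]

lemma lang_star_iff (hX : IsSubshift X) {u : List (Option A)} :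
    u ∈ lang (starShift X) ↔
      List.Chain' (fun a b => ¬(a = none ∧ b = none)) u ∧ u.reduceOption ∈ lang X := by
  constructor
  · rintro ⟨y, hy, i, hw⟩
    constructor
    · rw [List.Chain', List.isChain_iff_getElem]
      intro t ht
      have e1 : u.get ⟨t, by omega⟩ = y (i + t) := by
        rw [List.get_eq_getElem,
          ← List.getElem_of_eq hw (show t < (cfgWord y i u.length).length by
              simp only [length_cfgWord]; omega)]
        exact cfgWord_getElem y i t (by omega)
      have e2 : u.get ⟨t+1, by omega⟩ = y (i + t + 1) := by
        rw [List.get_eq_getElem,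
          ← List.getElem_of_eq hw (show t+1 < (cfgWord y i u.length).length by
              simp only [length_cfgWord]; omega)]
        rw [cfgWord_getElem y i (t+1) (by omega)]
        congr 1
        push_cast
        ring
      rw [List.get_eq_getElem] at e1 e2
      rw [e1, e2]
      exact hy.1 (i + t)
    · rw [← hw]
      exact hy.2 i u.length
  · rintro ⟨hch, hred⟩
    obtain ⟨x, hx, j, hw⟩ := hred
    classical
    set ru := u.reduceOption with hrudef
    set x' : ℤ → A := fun t => x (t + j) with hx'def
    have hx'X : x' ∈ X := shift_int_mem hX.2.1 hX.2.2.1 hx j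
    have hwt : ∀ t : ℕ, ∀ ht : t < ru.length, x' (t : ℤ) = ru[t] := by
      intro t ht
      have h1 : x (j + t) = ru[t] := by
        rw [← cfgWord_getElem x j t ht]
        exact List.getElem_of_eq hw (by simp only [length_cfgWord]; omega)
      rw [hx'def]
      rw [← h1]
      congr 1
      ring
    set r₀ : ℕ → Option A := fun n =>
      if h : n < u.length then u.get ⟨n, h⟩
      else some (x' ((n : ℤ) - u.length + ru.length)) with hr₀
    have hchg := List.isChain_iff_getElem.mp hch
    have hSR : StarRay r₀ := by
      rintro n ⟨h1, h2⟩
      by_cases hn1 : n + 1 < u.length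
      · have hn : n < u.length := by omega
        rw [hr₀] at h1 h2
        simp only [dif_pos hn] at h1
        simp only [dif_pos hn1] at h2
        exact hchg n (by omega) ⟨h1, h2⟩
      · rw [hr₀] at h2
        simp only [dif_neg hn1] at h2
        exact Option.some_ne_none _ h2
    obtain ⟨s, ψ, hemb, hre⟩ := hSR.extract
    have hune : r₀ u.length ≠ none := by
      rw [hr₀]
      simp only [dif_neg (lt_irrefl u.length)]
      exact Option.some_ne_none _
    obtain ⟨k₀, hk₀⟩ := starRay_ne_none (by rw [← hre]; exact hune)
    have hru0 : rayWord r₀ 0 u.length = u := by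
      apply List.ext_getElem (by simp)
      intro t h1 h2
      rw [rayWord_getElem r₀ 0 t (by simpa using h1)]
      rw [hr₀]
      simp only [Nat.zero_add, dif_pos h2]
      rw [List.get_eq_getElem]
    have hid := reduce_rayWord (s := s) hemb k₀
    rw [← hre, hk₀, hru0] at hid
    rw [← hrudef] at hid
    have hlen : ru.length = k₀ := by
      have := congrArg List.length hid
      simpa using this
    have hs1 : ∀ t, t < k₀ → s t = x' (t : ℤ) := by
      intro t ht
      have hg1 := rayWord_getElem s 0 t ht
      have hg2 : ru[t]'(by omega) = (rayWord s 0 k₀)[t]'(by simpa using ht) :=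
        List.getElem_of_eq hid (by omega)
      have h3 : ru[t]'(by omega) = s t := by rw [hg2, hg1, Nat.zero_add]
      rw [← h3]
      exact (hwt t (by omega)).symm
    have htailψ : ∀ d, ψ (k₀ + d) = u.length + d := by
      intro d
      induction d with
      | zero => simpa using hk₀
      | succ p ih =>
          rcases hemb.2 (k₀ + p) with g | g
          · rw [show k₀ + (p+1) = (k₀ + p) + 1 by ring, g, ih]
            ring
          · exfalso
            have hnone : starRay s ψ (ψ (k₀+p) + 1) = none :=
              starRay_eq_none (hemb.not_range_between (n := k₀ + p) (by omega) (by omega))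
            rw [← hre, ih] at hnone
            rw [hr₀] at hnone
            simp only [dif_neg (show ¬ (u.length + p + 1 < u.length) by omega)] at hnone
            exact Option.some_ne_none _ hnone
    have hs2 : ∀ d, s (k₀ + d) = x' ((k₀ + d : ℕ) : ℤ) := by
      intro d
      have h1 : starRay s ψ (ψ (k₀ + d)) = some (s (k₀ + d)) := starRay_apply hemb _
      rw [htailψ d, ← hre] at h1
      rw [hr₀] at h1
      simp only [dif_neg (show ¬ (u.length + d < u.length) by omega)] at h1
      rw [Option.some_inj] at h1
      rw [← h1]
      congr 1
      push_cast
      omega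
    have hs : s = rightRay x' := by
      funext t
      rcases lt_or_ge t k₀ with ht | ht
      · rw [rightRay]
        exact hs1 t ht
      · have h4 := hs2 (t - k₀)
        rw [show k₀ + (t - k₀) = t by omega] at h4
        rw [rightRay]
        exact h4
    have hmem := glue_starRay_mem hX (sl := leftRay x') (sr := s) embed_id hemb (Or.inl rfl)
      (show glue (leftRay x') s ∈ X by rw [hs, glue_eq_self]; exact hx'X)
    refine ⟨glue (starRay (leftRay x') id) (starRay s ψ), hmem, 0, ?_⟩
    apply List.ext_getElem (by simp)
    intro t h1 h2
    rw [cfgWord_getElem _ 0 t (by simpa using h1)]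
    rw [glue, if_pos (by omega)]
    have e : ((0:ℤ) + t).toNat = t := by omega
    rw [e, ← hre]
    rw [hr₀]
    simp only [dif_pos h2]
    rw [List.get_eq_getElem]

end StarShiftLemmas


section StarMore
variable {A : Type*} {X : Set (ℤ → A)}

lemma starShift_shiftMap {z : ℤ → Option A} (hz : z ∈ starShift X) :
    shiftMap z ∈ starShift X := by
  constructor
  · intro i
    exact hz.1 (i + 1)
  · intro i k
    have e : cfgWord (shiftMap z) i k = cfgWord z (i+1) k :=
      cfgWord_ext (fun t ht => by show z (i + t + 1) = z (i + 1 + t); congr 1; ring)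
    rw [e]
    exact hz.2 (i+1) k

lemma starShift_shiftInvMap {z : ℤ → Option A} (hz : z ∈ starShift X) :
    shiftInvMap z ∈ starShift X := by
  constructor
  · rintro i ⟨h1, h2⟩
    refine hz.1 (i - 1) ⟨h1, ?_⟩
    have h2' : z (i + 1 - 1) = none := h2
    rw [show i - 1 + 1 = i + 1 - 1 by ring]
    exact h2' 
  · intro i k
    have e : cfgWord (shiftInvMap z) i k = cfgWord z (i-1) k :=
      cfgWord_ext (fun t ht => by show z (i + t - 1) = z (i - 1 + t); congr 1; ring)
    rw [e]
    exact hz.2 (i-1) k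

lemma some_comp_mem (hX : IsSubshift X) {x : ℤ → A} (hx : x ∈ X) :
    (fun i => some (x i)) ∈ starShift X := by
  have h := glue_starRay_mem hX (sl := leftRay x) (sr := rightRay x) embed_id embed_id
    (Or.inl rfl) (by rw [glue_eq_self]; exact hx)
  have e : glue (starRay (leftRay x) id) (starRay (rightRay x) id) = fun i => some (x i) := by
    rw [starRay_id, starRay_id]
    funext i
    rw [glue]
    split
    · next h' =>
        show some (x ((i.toNat : ℕ) : ℤ)) = some (x i)
        rw [show ((i.toNat : ℕ) : ℤ) = i by omega]
    · next h' =>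
        show some (x (-1 - (((-1 - i).toNat : ℕ) : ℤ))) = some (x i)
        rw [show (-1 - (((-1 - i).toNat : ℕ) : ℤ)) = i by omega]
  rw [← e]
  exact h

lemma map_some_mem_lang (hX : IsSubshift X) {w : List A} (hw : w ∈ lang X) :
    w.map some ∈ lang (starShift X) := by
  obtain ⟨x, hx, i, hww⟩ := hw
  refine ⟨fun j => some (x j), some_comp_mem hX hx, i, ?_⟩
  apply List.ext_getElem (by simp)
  intro t h1 h2
  rw [cfgWord_getElem _ i t (by simpa using h1)]
  rw [List.getElem_map]
  congr 1
  rw [← cfgWord_getElem x i t (by simpa using h2)]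
  exact List.getElem_of_eq hww (by simpa using h2)

lemma chain'_map_some (t : List A) :
    List.Chain' (fun a b => ¬(a = none ∧ b = none)) (t.map some) := by
  rw [List.Chain', List.isChain_iff_getElem]
  intro i h
  simp only [List.getElem_map]
  simp

lemma transitive_star (hX : IsSubshift X) (hT : TransitiveShift X) :
    TransitiveShift (starShift X) := by
  have key : ∀ v ∈ lang (starShift X), (∀ (hne : v ≠ []), v.head hne ≠ none) →
      ∀ u ∈ lang (starShift X), ∃ m, u ++ m ++ v ∈ lang (starShift X) := by
    intro v hv hvh u hu
    rw [lang_star_iff hX] at hu hv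
    obtain ⟨t, ht⟩ := hT _ hu.2 _ hv.2
    refine ⟨t.map some, ?_⟩
    rw [lang_star_iff hX]
    constructor
    · rw [List.Chain', List.isChain_append]
      refine ⟨?_, hv.1, ?_⟩
      · rw [List.isChain_append]
        refine ⟨hu.1, chain'_map_some t, ?_⟩
        intro a ha b hb
        rw [List.head?_map] at hb
        intro ⟨_, hbn⟩
        obtain ⟨c, _, hc2⟩ := Option.map_eq_some_iff.mp hb
        rw [← hc2] at hbn
        exact Option.some_ne_none _ hbn
      · intro a ha b hb
        intro ⟨_, hbn⟩
        cases v with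
        | nil => simp at hb
        | cons c cs =>
            rw [List.head?_cons, Option.mem_def, Option.some_inj] at hb
            exact hvh (List.cons_ne_nil c cs) (by rw [List.head_cons, hb]; exact hbn)
    · rw [List.reduceOption_append, List.reduceOption_append, reduceOption_map_some]
      exact ht
  intro u hu v hv
  by_cases hv0 : v = []
  · subst hv0
    exact key [] hv (fun hne => absurd rfl hne) u hu
  · by_cases hvh : v.head hv0 = none
    · obtain ⟨y, hy, i, hwv⟩ := hv
      have hhead : y i = none := by
        have h0 : v.head hv0 = v[0]'(by exact List.length_pos_iff.mpr hv0) := List.head_eq_getElem hv0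
        rw [h0] at hvh
        rw [← List.getElem_of_eq hwv (by simp only [length_cfgWord]; exact List.length_pos_iff.mpr hv0)] at hvh
        rw [cfgWord_getElem y i 0 (List.length_pos_iff.mpr hv0)] at hvh
        simpa using hvh
      have hprev : y (i - 1) ≠ none := by
        intro hc
        exact hy.1 (i-1) ⟨hc, by rw [show i - 1 + 1 = i by ring]; exact hhead⟩
      set v' := cfgWord y (i-1) (1 + v.length) with hv'def
      have hv' : v' ∈ lang (starShift X) := ⟨y, hy, i - 1, by rw [length_cfgWord]⟩
      have hsplit : v' = y (i-1) :: v := by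
        rw [hv'def, cfgWord_add y (i-1) 1 v.length, cfgWord_one]
        rw [show i - 1 + ((1:ℕ) : ℤ) = i by push_cast; ring]
        rw [hwv]
        rfl
      have hne' : v' ≠ [] := by rw [hsplit]; exact List.cons_ne_nil _ _
      have hhead' : ∀ (hne : v' ≠ []), v'.head hne ≠ none := by
        intro hne
        have h0 : v'.head hne = v'[0]'(List.length_pos_iff.mpr hne) := List.head_eq_getElem hne
        rw [h0]
        have h1 : v'[0]'(List.length_pos_iff.mpr hne) = y (i-1) := by
          rw [List.getElem_of_eq hsplit (List.length_pos_iff.mpr hne)]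
          rfl
        rw [h1]
        exact hprev
      obtain ⟨m, hm⟩ := key v' hv' hhead' u hu
      refine ⟨m ++ [y (i-1)], ?_⟩
      have e : u ++ m ++ v' = u ++ (m ++ [y (i-1)]) ++ v := by
        rw [hsplit]
        simp
      rw [← e]
      exact hm
    · exact key v hv (fun _ => hvh) u hu

end StarMore


section Foll
variable {A : Type*} {X : Set (ℤ → A)}

lemma raySuffix_starRay {l : ℕ → A} {w : List A} {ψ : ℕ → ℕ} (hemb : Embed ψ)
    (hid : ∀ n < w.length, ψ n = n) (hsuf : raySuffix l w) :
    raySuffix (starRay l ψ) (w.map some) := by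
  intro k
  have hk : (k : ℕ) < w.length := by have := k.isLt; simpa using this
  have hn : w.length - 1 - (k : ℕ) < w.length := by omega
  have hψ : ψ (w.length - 1 - (k : ℕ)) = w.length - 1 - (k : ℕ) := hid _ hn
  have happ := starRay_apply (s := l) hemb (w.length - 1 - (k : ℕ))
  rw [hψ] at happ
  rw [show (w.map some).length - 1 - (k : ℕ) = w.length - 1 - (k:ℕ) by simp]
  rw [happ, List.get_eq_getElem, List.getElem_map]
  exact congrArg some (hsuf ⟨k, hk⟩)

lemma unstar_raySuffix {sl : ℕ → A} {w : List A} {ψ : ℕ → ℕ} (hemb : Embed ψ)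
    (hsuf : raySuffix (starRay sl ψ) (w.map some)) :
    (∀ n < w.length, ψ n = n) ∧ raySuffix sl w := by
  have hnn : ∀ n < w.length, starRay sl ψ n ≠ none := by
    intro n hn
    have h1 := hsuf ⟨w.length - 1 - n, by simp; omega⟩
    rw [show (w.map some).length - 1 - (w.length - 1 - n) = n by simp; omega] at h1
    rw [h1, List.get_eq_getElem, List.getElem_map]
    exact Option.some_ne_none _
  have hid := hemb.id_of_ne_none hnn
  refine ⟨hid, ?_⟩
  intro k
  have hk : (k:ℕ) < w.length := k.isLt
  have h1 := hsuf ⟨(k:ℕ), by simp [hk]⟩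
  rw [show (w.map some).length - 1 - ((⟨(k:ℕ), by simp [hk]⟩ : Fin (w.map some).length) : ℕ)
      = w.length - 1 - (k:ℕ) by simp] at h1
  have hn : w.length - 1 - (k:ℕ) < w.length := by omega
  have happ := starRay_apply (s := sl) hemb (w.length - 1 - (k:ℕ))
  rw [hid _ hn] at happ
  rw [happ] at h1
  rw [List.get_eq_getElem, List.getElem_map] at h1
  rw [Option.some_inj] at h1
  rw [List.get_eq_getElem]
  exact h1

lemma follW_star_decompose (hX : IsSubshift X) {w : List A} {r : ℕ → Option A}
    (hr : r ∈ follW (starShift X) (w.map some)) :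
    ∃ sr ψr, Embed ψr ∧ r = starRay sr ψr ∧ sr ∈ follW X w := by
  obtain ⟨y, hy, hray⟩ := hr
  have hzmem : (fun i => y (i + (w.length : ℤ))) ∈ starShift X :=
    shift_left_mem (fun a ha => starShift_shiftMap ha) hy w.length
  have hzr : rightRay (fun i => y (i + (w.length:ℤ))) = r := by
    funext n
    show y ((n:ℤ) + w.length) = r n
    have h1 : rightRay y ((n + w.length : ℕ)) = wordThen (w.map some) r (n + w.length) :=
      congrFun hray _
    rw [rightRay] at h1
    rw [wordThen, dif_neg (by simp)] at h1
    rw [show n + w.length - (w.map some).length = n by simp] at h1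
    rw [show ((n:ℤ) + (w.length:ℤ)) = ((n + w.length : ℕ) : ℤ) by push_cast; ring]
    exact h1
  obtain ⟨sl, ψl, sr, ψr, hl, hrr, hb, hLe, hRe, hglue⟩ := starShift_decompose hX hzmem
  have hsufz : raySuffix (leftRay (fun i => y (i + (w.length:ℤ)))) (w.map some) := by
    intro k
    have hk : (k:ℕ) < w.length := by have := k.isLt; simpa using this
    show y (-1 - (((w.map some).length - 1 - (k:ℕ) : ℕ):ℤ) + w.length) = (w.map some).get k
    have h1 : rightRay y ((k:ℕ)) = wordThen (w.map some) r (k:ℕ) := congrFun hray _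
    rw [rightRay] at h1
    rw [wordThen, dif_pos (by simp [hk])] at h1
    rw [show (-1 - (((w.map some).length - 1 - (k:ℕ) : ℕ):ℤ) + w.length) = ((k:ℕ):ℤ) by
      simp only [List.length_map]; omega]
    rw [h1]
    try rfl
  rw [hLe] at hsufz
  obtain ⟨hidl, hsufsl⟩ := unstar_raySuffix hl hsufz
  have hfw : sr ∈ follW X w :=
    foll_subset_follW hX.2.1 hX.2.2.1 hsufsl (show sr ∈ foll X sl from hglue)
  exact ⟨sr, ψr, hrr, by rw [← hzr]; exact hRe, hfw⟩

lemma foll_star_eq_main (hX : IsSubshift X) {w : List A} {sl : ℕ → A} {ψl : ℕ → ℕ}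
    (hemb : Embed ψl) (hψ0 : ψl 0 = 0) (hsufl : raySuffix sl w)
    (hid : ∀ n < w.length, ψl n = n)
    (hfoll : follW X w ⊆ foll X sl) :
    foll (starShift X) (starRay sl ψl) = follW (starShift X) (w.map some) := by
  apply Set.Subset.antisymm
  · exact foll_subset_follW (fun y hy => starShift_shiftMap hy)
      (fun y hy => starShift_shiftInvMap hy) (raySuffix_starRay hemb hid hsufl)
  · intro r hr
    obtain ⟨sr, ψr, hrr, hre, hsr⟩ := follW_star_decompose hX hr
    have h1 : glue sl sr ∈ X := hfoll hsr
    have h2 := glue_starRay_mem hX hemb hrr (Or.inl hψ0) h1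
    show glue (starRay sl ψl) r ∈ starShift X
    rw [hre]
    exact h2

lemma syncWord_star (hX : IsSubshift X) {w : List A} (hw0 : w ≠ []) (hs : SyncWord X w) :
    SyncWord (starShift X) (w.map some) := by
  refine ⟨map_some_mem_lang hX hs.1, ?_⟩
  rintro l' ⟨z₀, hz₀, rfl⟩ hsuf
  obtain ⟨sl, ψl, sr₀, ψr₀, hl, hr₀, hb, hLe, hRe, hglue⟩ := starShift_decompose hX hz₀
  rw [hLe] at hsuf ⊢
  obtain ⟨hid, hsufsl⟩ := unstar_raySuffix hl hsuf
  have hψ0 : ψl 0 = 0 := hid 0 (by cases w with | nil => exact absurd rfl hw0 | cons a l => simp)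
  have hslX : sl ∈ LeftRays X := ⟨glue sl sr₀, hglue, leftRay_glue sl sr₀⟩
  have heq := hs.2 sl hslX hsufsl
  exact foll_star_eq_main hX hl hψ0 hsufsl hid heq.ge

lemma syncWord_extend (hX : IsSubshift X) {w : List A} (hs : SyncWord X w) {a : A}
    (ha : a :: w ∈ lang X) : SyncWord X (a :: w) := by
  refine ⟨ha, ?_⟩
  intro l hl hsuf
  have hsuf' : raySuffix l w := by
    intro k
    have h1 := hsuf ⟨(k:ℕ)+1, by simp⟩
    simp only [List.length_cons] at h1
    rw [show w.length + 1 - 1 - ((k:ℕ)+1) = w.length - 1 - (k:ℕ) by omega] at h1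
    rw [h1]
    rw [List.get_eq_getElem, List.get_eq_getElem, List.getElem_cons_succ]
  have heq := hs.2 l hl hsuf'
  apply Set.Subset.antisymm
  · exact foll_subset_follW hX.2.1 hX.2.2.1 hsuf
  · intro r hr
    have hr' : r ∈ follW X w := follW_cons_subset hX.2.1 a w hr
    rw [heq]
    exact hr'

lemma exists_cons_lang {w : List A} (hw : w ∈ lang X) : ∃ a, a :: w ∈ lang X := by
  obtain ⟨x, hx, i, hww⟩ := hw
  refine ⟨x (i-1), x, hx, i - 1, ?_⟩
  have hlen : (x (i-1) :: w).length = 1 + w.length := by simp [Nat.add_comm]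
  rw [hlen, cfgWord_add, cfgWord_one]
  rw [show i - 1 + ((1:ℕ):ℤ) = i by push_cast; ring, hww]
  rfl

end Foll


section Construction
variable {A : Type*} {X : Set (ℤ → A)}

/-- Insert a star just left (in ray order) of position `n` of the base ray, for each `n ∈ T`. -/
noncomputable def ψofT (T : Set ℕ) : ℕ → ℕ := fun n => n + (T ∩ Set.Iio n).ncard

lemma ψofT_zero (T : Set ℕ) : ψofT T 0 = 0 := by
  rw [ψofT]
  have he : T ∩ Set.Iio 0 = ∅ := by
    ext m
    simp
  rw [he, Set.ncard_empty]

lemma ψofT_gap2 {T : Set ℕ} {n : ℕ} (hn : n ∈ T) : ψofT T (n+1) = ψofT T n + 2 := by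
  have hfin : (T ∩ Set.Iio n).Finite := Set.Finite.subset (Set.finite_Iio n) Set.inter_subset_right
  have he : T ∩ Set.Iio (n+1) = insert n (T ∩ Set.Iio n) := by
    ext m
    simp only [Set.mem_inter_iff, Set.mem_Iio, Set.mem_insert_iff]
    constructor
    · rintro ⟨hm, hlt⟩
      rcases Nat.lt_succ_iff_lt_or_eq.mp hlt with h | h
      · exact Or.inr ⟨hm, h⟩
      · exact Or.inl h
    · rintro (rfl | ⟨hm, hlt⟩)
      · exact ⟨hn, by omega⟩
      · exact ⟨hm, by omega⟩
  rw [ψofT, ψofT, he, Set.ncard_insert_of_notMem (by simp) hfin]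
  ring

lemma ψofT_gap1 {T : Set ℕ} {n : ℕ} (hn : n ∉ T) : ψofT T (n+1) = ψofT T n + 1 := by
  have he : T ∩ Set.Iio (n+1) = T ∩ Set.Iio n := by
    ext m
    simp only [Set.mem_inter_iff, Set.mem_Iio]
    constructor
    · rintro ⟨hm, hlt⟩
      refine ⟨hm, ?_⟩
      rcases Nat.lt_succ_iff_lt_or_eq.mp hlt with h | h
      · exact h
      · exact absurd (h ▸ hm) hn
    · rintro ⟨hm, hlt⟩
      exact ⟨hm, by omega⟩
  rw [ψofT, ψofT, he]
  ring

lemma ψofT_embed (T : Set ℕ) : Embed (ψofT T) := by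
  refine ⟨by rw [ψofT_zero]; omega, fun n => ?_⟩
  by_cases hn : n ∈ T
  · rw [ψofT_gap2 hn]
    right
    rfl
  · rw [ψofT_gap1 hn]
    left
    rfl

lemma ψofT_id {T : Set ℕ} {n : ℕ} (h : ∀ m ∈ T, n ≤ m) : ψofT T n = n := by
  rw [ψofT]
  have : T ∩ Set.Iio n = ∅ := by
    ext m
    simp only [Set.mem_inter_iff, Set.mem_Iio, Set.mem_empty_iff_false, iff_false]
    rintro ⟨hm, hlt⟩
    exact absurd (h m hm) (by omega)
  rw [this]
  simp

lemma occurs_far {l : ℕ → A} (hl : langL l = lang X) (hT : TransitiveShift X)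
    {v : List A} (hv : v ∈ lang X) (N : ℕ) :
    ∃ j, N ≤ j ∧ ∀ k : Fin v.length, l (j + (v.length - 1 - (k:ℕ))) = v.get k := by
  have hsfx : sufW l N ∈ lang X := by rw [← hl]; exact occursInLeft_sufW l N
  obtain ⟨t, ht⟩ := hT v hv (sufW l N) hsfx
  rw [← hl] at ht
  obtain ⟨j', hj'⟩ := ht
  refine ⟨j' + t.length + N, by omega, ?_⟩
  intro k
  have hlen : (v ++ t ++ sufW l N).length = v.length + t.length + N := by
    simp [sufW_length]
    omega
  have hk : (k:ℕ) < (v ++ t ++ sufW l N).length := by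
    rw [hlen]; omega
  have h1 : l (j' + ((v ++ t ++ sufW l N).length - 1 - (k:ℕ)))
      = (v ++ t ++ sufW l N).get ⟨(k:ℕ), hk⟩ := hj' ⟨(k:ℕ), hk⟩
  have hval : (v ++ t ++ sufW l N).get ⟨(k:ℕ), hk⟩ = v.get k := by
    rw [List.get_eq_getElem, List.get_eq_getElem]
    rw [List.getElem_append_left (by simp only [List.length_append]; omega)]
    rw [List.getElem_append_left (by exact k.isLt)]
  rw [hval] at h1
  rw [← h1]
  congr 1
  have := k.isLt
  omega

end Construction


section Realize
variable {A : Type*} {X : Set (ℤ → A)}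

lemma rayWord_eq_cfgWord_glue (a b : ℕ → A) (k : ℕ) :
    rayWord b 0 k = cfgWord (glue a b) 0 k := by
  apply List.ext_getElem (by simp)
  intro t h1 h2
  rw [rayWord_getElem b 0 t (by simpa using h1), cfgWord_getElem _ 0 t (by simpa using h1)]
  rw [glue, if_pos (by omega)]
  congr 1 <;> omega

lemma realize (hX : IsSubshift X) (hT : TransitiveShift X) {l : ℕ → A} (hl : langL l = lang X)
    (u : List (Option A)) (hu : u ∈ lang (starShift X)) (N : ℕ) :
    ∃ d : ℕ × ℕ × Set ℕ, N ≤ d.1 ∧ d.2.2 ⊆ Set.Ico d.1 (d.1 + d.2.1) ∧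
      ∀ T : Set ℕ, T ∩ Set.Ico d.1 (d.1 + d.2.1) = d.2.2 →
        occursInLeft (starRay l (ψofT T)) u := by
  classical
  by_cases hu0 : u = []
  · refine ⟨(N, 0, ∅), le_rfl, by simp, fun T hT' => ⟨0, fun k => ?_⟩⟩
    have hl0 : u.length = 0 := by rw [hu0]; rfl
    exact absurd k.isLt (by omega)
  have hulen : 0 < u.length := List.length_pos_iff.mpr hu0
  obtain ⟨y₀, hy₀, i₀, hw₀⟩ := hu
  set y : ℤ → Option A := fun t => y₀ (t + i₀) with hydef
  have hy : y ∈ starShift X :=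
    shift_int_mem (fun s hs => starShift_shiftMap hs) (fun s hs => starShift_shiftInvMap hs) hy₀ i₀
  have hyu : ∀ (t : ℕ) (ht : t < u.length), y (t : ℤ) = u[t]'ht := by
    intro t ht
    have h1 : y₀ (i₀ + t) = u[t] := by
      rw [← cfgWord_getElem y₀ i₀ t ht]
      exact List.getElem_of_eq hw₀ (by simpa using ht)
    rw [hydef, ← h1]
    congr 1
    ring
  set a : ℕ := if u[0]'hulen = none then 1 else 0 with hadef
  set c : ℕ := if u[u.length - 1]'(by omega) = none then 1 else 0 with hcdef
  set L : ℕ := a + (u.length + c) with hLdef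
  set z : ℤ → Option A := fun t => y (t + -(a:ℤ)) with hzdef
  have hz : z ∈ starShift X :=
    shift_int_mem (fun s hs => starShift_shiftMap hs) (fun s hs => starShift_shiftInvMap hs)
      hy (-(a:ℤ))
  have hzu : ∀ (t : ℕ) (ht : t < u.length), z ((a + t : ℕ) : ℤ) = u[t]'ht := by
    intro t ht
    rw [hzdef]
    show y (((a + t : ℕ) : ℤ) + -(a:ℤ)) = _
    rw [show ((a + t : ℕ) : ℤ) + -(a:ℤ) = (t : ℤ) by push_cast; ring]
    exact hyu t ht
  have hz0 : z ((0:ℕ) : ℤ) ≠ none := by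
    by_cases h : u[0]'hulen = none
    · have ha1 : a = 1 := by rw [hadef, if_pos h]
      rw [hzdef]
      show y (((0:ℕ):ℤ) + -(a:ℤ)) ≠ none
      rw [show ((0:ℕ):ℤ) + -(a:ℤ) = -1 by rw [ha1]; omega]
      intro hc
      refine hy.1 (-1) ⟨hc, ?_⟩
      rw [show (-1 : ℤ) + 1 = ((0:ℕ):ℤ) by omega]
      rw [hyu 0 hulen]
      exact h
    · have ha0 : a = 0 := by rw [hadef, if_neg h]
      rw [hzdef]
      show y (((0:ℕ):ℤ) + -(a:ℤ)) ≠ none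
      rw [show ((0:ℕ):ℤ) + -(a:ℤ) = ((0:ℕ):ℤ) by rw [ha0]; omega]
      rw [hyu 0 hulen]
      exact h
  have hzL : z ((L - 1 : ℕ) : ℤ) ≠ none := by
    by_cases h : u[u.length - 1]'(by omega) = none
    · have hc1 : c = 1 := by rw [hcdef, if_pos h]
      rw [hzdef]
      show y (((L - 1 : ℕ):ℤ) + -(a:ℤ)) ≠ none
      rw [show ((L - 1 : ℕ):ℤ) + -(a:ℤ) = ((u.length:ℕ):ℤ) by
        rw [hLdef, hc1]; push_cast; omega]
      intro hcon
      refine hy.1 ((u.length : ℤ) - 1) ⟨?_, ?_⟩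
      · rw [show (u.length : ℤ) - 1 = ((u.length - 1 : ℕ) : ℤ) by omega]
        rw [hyu (u.length - 1) (by omega)]
        exact h
      · rw [show (u.length : ℤ) - 1 + 1 = ((u.length : ℕ) : ℤ) by omega]
        exact hcon
    · have hc0 : c = 0 := by rw [hcdef, if_neg h]
      rw [hzdef]
      show y (((L - 1 : ℕ):ℤ) + -(a:ℤ)) ≠ none
      rw [show ((L - 1 : ℕ):ℤ) + -(a:ℤ) = ((u.length - 1 : ℕ):ℤ) by
        rw [hLdef, hc0]; push_cast; omega]
      rw [hyu (u.length - 1) (by omega)]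
      exact h
  obtain ⟨al, αl, b, β, hαl, hβ, hbd, hLe, hRe, hglue⟩ := starShift_decompose hX hz
  have hzb : ∀ t : ℕ, z (t:ℤ) = starRay b β t := fun t => congrFun hRe t
  have hβ0 : β 0 = 0 := by
    obtain ⟨m, hm⟩ := starRay_ne_none (by rw [← hzb 0]; exact hz0)
    have := hβ.strictMono.monotone (Nat.zero_le m)
    omega
  obtain ⟨q, hq⟩ : ∃ q, β q = L - 1 := starRay_ne_none (by rw [← hzb (L-1)]; exact hzL)
  have hvb : rayWord b 0 (q+1) ∈ lang X := by
    rw [rayWord_eq_cfgWord_glue al b]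
    exact cfgWord_mem_lang hglue 0 (q+1)
  obtain ⟨j, hjN, hocc⟩ := occurs_far hl hT hvb N
  have hoccb : ∀ t, t ≤ q → l (j + (q - t)) = b t := by
    intro t htq
    have hh : t < (rayWord b 0 (q+1)).length := by simp; omega
    have h1 : l (j + ((rayWord b 0 (q+1)).length - 1 - t)) = (rayWord b 0 (q+1)).get ⟨t, hh⟩ :=
      hocc ⟨t, hh⟩
    have hval : (rayWord b 0 (q+1)).get ⟨t, hh⟩ = b t := by
      rw [List.get_eq_getElem]
      exact (rayWord_getElem b 0 t (by omega)).trans (congrArg b (Nat.zero_add t))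
    rw [hval] at h1
    rw [length_rayWord] at h1
    rw [show q + 1 - 1 - t = q - t by omega] at h1
    exact h1
  refine ⟨(j, q, {m | ∃ t, t < q ∧ m = j + t ∧ β (q - t) = β (q - t - 1) + 2}), hjN, ?_, ?_⟩
  · rintro m ⟨t, htq, rfl, _⟩
    show j + t ∈ Set.Ico j (j + q)
    rw [Set.mem_Ico]
    omega
  · intro T hTT0
    have hTT : T ∩ Set.Ico j (j + q) = {m | ∃ t, t < q ∧ m = j + t ∧ β (q - t) = β (q - t - 1) + 2} := hTT0
    have hmemT : ∀ t, t < q → (j + t ∈ T ↔ β (q - t) = β (q - t - 1) + 2) := by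
      intro t htq
      constructor
      · intro hmem
        have hm2 : j + t ∈ T ∩ Set.Ico j (j + q) := ⟨hmem, by rw [Set.mem_Ico]; omega⟩
        rw [hTT] at hm2
        obtain ⟨t', ht'q, he, hg⟩ := hm2
        have : t' = t := by omega
        rw [← this]
        exact hg
      · intro hg
        have hm2 : j + t ∈ T ∩ Set.Ico j (j + q) := by
          rw [hTT]
          exact ⟨t, htq, rfl, hg⟩
        exact hm2.1
    have stepA : ∀ t, t ≤ q → ψofT T (j + t) = ψofT T j + (β q - β (q - t)) := by
      intro t htq
      induction t with
      | zero => simp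
      | succ p ih =>
          have hp : p ≤ q := by omega
          have hih := ih hp
          have hmono1 : β (q - p - 1) < β (q - p) := hβ.strictMono (by omega)
          have hmono2 : β (q - p) ≤ β q := hβ.strictMono.monotone (by omega)
          have hgap := hβ.2 (q - p - 1)
          rw [show q - p - 1 + 1 = q - p by omega] at hgap
          by_cases hm : j + p ∈ T
          · have hg2 : β (q - p) = β (q - p - 1) + 2 := (hmemT p (by omega)).mp hm
            rw [show j + (p+1) = (j + p) + 1 by ring, ψofT_gap2 hm, hih,
              show q - (p+1) = q - p - 1 by omega]
            omega
          · have hg1 : β (q - p) = β (q - p - 1) + 1 := by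
              rcases hgap with hcase | hcase
              · omega
              · exact absurd ((hmemT p (by omega)).mpr hcase) hm
            rw [show j + (p+1) = (j + p) + 1 by ring, ψofT_gap1 hm, hih,
              show q - (p+1) = q - p - 1 by omega]
            omega
    have hclaim : ∀ k : ℕ, k ≤ β q → starRay l (ψofT T) (ψofT T j + (β q - k)) = z (k : ℤ) := by
      intro k hk
      by_cases hkr : ∃ t, β t = k
      · obtain ⟨t, rfl⟩ := hkr
        have htq : t ≤ q := by
          by_contra hc
          have := hβ.strictMono (show q < t by omega)
          omega
        have h1 : ψofT T j + (β q - β t) = ψofT T (j + (q - t)) := by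
          rw [stepA (q - t) (by omega), show q - (q - t) = t by omega]
        rw [h1, starRay_apply (ψofT_embed T), hzb (β t), starRay_apply hβ]
        exact congrArg some (hoccb t htq)
      · push_neg at hkr
        have hzk : z (k:ℤ) = none := by
          rw [hzb k]
          exact starRay_eq_none (fun t ht => hkr t ht)
        rw [hzk]
        have hk0 : β 0 ≤ k := by omega
        obtain ⟨t, ht1, ht2⟩ := hβ.exists_between hk0
        have hkne : k ≠ β t := fun hc => hkr t hc.symm
        have hgap := hβ.2 t
        have hkeq : k = β t + 1 := by rcases hgap with hcase | hcase <;> omega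
        have hgap2 : β (t+1) = β t + 2 := by rcases hgap with hcase | hcase <;> omega
        have htq : t < q := by
          by_contra hc
          push_neg at hc
          have := hβ.strictMono.monotone hc
          omega
        have hm1 : β (t+1) ≤ β q := hβ.strictMono.monotone (by omega)
        have hA1 : ψofT T (j + (q - t)) = ψofT T j + (β q - β t) := by
          rw [stepA (q - t) (by omega), show q - (q - t) = t by omega]
        have hA2 : ψofT T (j + (q - t) - 1) = ψofT T j + (β q - β (t+1)) := by
          rw [show j + (q - t) - 1 = j + (q - t - 1) by omega,
            stepA (q - t - 1) (by omega), show q - (q - t - 1) = t + 1 by omega]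
        apply starRay_eq_none
        apply (ψofT_embed T).not_range_between (n := j + (q - t) - 1)
        · rw [hA2]
          omega
        · rw [show (j + (q - t) - 1) + 1 = j + (q - t) by omega, hA1]
          omega
    refine ⟨ψofT T j + (β q - (a + u.length - 1)), fun k => ?_⟩
    have hkl := k.isLt
    have hβq : β q + 1 = a + u.length + c := by omega
    have e1 : ψofT T j + (β q - (a + u.length - 1)) + (u.length - 1 - (k:ℕ))
        = ψofT T j + (β q - (a + (k:ℕ))) := by omega
    rw [e1]
    have h2 := hclaim (a + (k:ℕ)) (by omega)
    rw [h2, hzu (k:ℕ) hkl, List.get_eq_getElem]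

end Realize


section Main
variable {A : Type*} {X : Set (ℤ → A)}

lemma halfSyncWord_star [Finite A] (hX : IsSubshift X) (hT : TransitiveShift X)
    {w : List A} (hs : HalfSyncWord X w) : HalfSyncWord (starShift X) (w.map some) := by
  classical
  obtain ⟨hwlang, el, hlL, hsuf, hlang, hfoll⟩ := hs
  obtain ⟨x₀, hx₀⟩ := hX.1
  have hcnt : (lang (starShift X)).Countable := Set.to_countable _
  have hne : (lang (starShift X)).Nonempty := ⟨[], nil_mem_lang ⟨_, some_comp_mem hX hx₀⟩⟩
  obtain ⟨U, hU⟩ := Set.Countable.exists_eq_range hcnt hne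
  have hUmem : ∀ n, U n ∈ lang (starShift X) := fun n => by rw [hU]; exact ⟨n, rfl⟩
  have hreal : ∀ (n N : ℕ), ∃ d : ℕ × ℕ × Set ℕ, N ≤ d.1 ∧
      d.2.2 ⊆ Set.Ico d.1 (d.1 + d.2.1) ∧
      ∀ T : Set ℕ, T ∩ Set.Ico d.1 (d.1 + d.2.1) = d.2.2 →
        occursInLeft (starRay el (ψofT T)) (U n) :=
    fun n N => realize hX hT hlang (U n) (hUmem n) N
  let g : ℕ → ℕ × ℕ × Set ℕ := fun n =>
    Nat.rec (Classical.choose (hreal 0 (w.length + 1)))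
      (fun m prev => Classical.choose (hreal (m+1) (prev.1 + prev.2.1 + 1))) n
  have hg0 := Classical.choose_spec (hreal 0 (w.length + 1))
  have hgs : ∀ n, (g n).1 + (g n).2.1 + 1 ≤ (g (n+1)).1 ∧
      (g (n+1)).2.2 ⊆ Set.Ico (g (n+1)).1 ((g (n+1)).1 + (g (n+1)).2.1) ∧
      ∀ T : Set ℕ, T ∩ Set.Ico (g (n+1)).1 ((g (n+1)).1 + (g (n+1)).2.1) = (g (n+1)).2.2 →
        occursInLeft (starRay el (ψofT T)) (U (n+1)) :=
    fun n => Classical.choose_spec (hreal (n+1) ((g n).1 + (g n).2.1 + 1))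
  have hspec : ∀ n, (g n).2.2 ⊆ Set.Ico (g n).1 ((g n).1 + (g n).2.1) ∧
      ∀ T : Set ℕ, T ∩ Set.Ico (g n).1 ((g n).1 + (g n).2.1) = (g n).2.2 →
        occursInLeft (starRay el (ψofT T)) (U n) := by
    intro n
    cases n with
    | zero => exact ⟨hg0.2.1, hg0.2.2⟩
    | succ m => exact ⟨(hgs m).2.1, (hgs m).2.2⟩
  have hlow : w.length + 1 ≤ (g 0).1 := hg0.1
  have hstep : ∀ n, (g n).1 + (g n).2.1 + 1 ≤ (g (n+1)).1 := fun n => (hgs n).1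
  have hmonoJ : ∀ m n, m < n → (g m).1 + (g m).2.1 < (g n).1 := by
    intro m n hmn
    induction n with
    | zero => omega
    | succ p ih =>
        rcases Nat.lt_succ_iff_lt_or_eq.mp hmn with h | h
        · have h1 := ih h
          have h2 := hstep p
          omega
        · subst h
          have := hstep m
          omega
  have hlowAll : ∀ n, w.length + 1 ≤ (g n).1 := by
    intro n
    cases n with
    | zero => exact hlow
    | succ p =>
        have := hmonoJ 0 (p+1) (by omega)
        omega
  set T : Set ℕ := ⋃ n, (g n).2.2 with hTdef
  have hTn : ∀ n, T ∩ Set.Ico (g n).1 ((g n).1 + (g n).2.1) = (g n).2.2 := by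
    intro n
    apply Set.Subset.antisymm
    · rintro m ⟨hmT, hmI⟩
      rw [hTdef] at hmT
      obtain ⟨p, hmS⟩ := Set.mem_iUnion.mp hmT
      rcases lt_trichotomy p n with h | h | h
      · exfalso
        have h1 := (hspec p).1 hmS
        have h2 := hmonoJ p n h
        rw [Set.mem_Ico] at h1 hmI
        omega
      · rw [← h]
        exact hmS
      · exfalso
        have h1 := (hspec p).1 hmS
        have h2 := hmonoJ n p h
        rw [Set.mem_Ico] at h1 hmI
        omega
    · intro m hm
      exact ⟨by rw [hTdef]; exact Set.mem_iUnion.mpr ⟨n, hm⟩, (hspec n).1 hm⟩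
  have hTlow : ∀ m ∈ T, w.length + 1 ≤ m := by
    intro m hm
    rw [hTdef] at hm
    obtain ⟨p, hmS⟩ := Set.mem_iUnion.mp hm
    have h1 := (hspec p).1 hmS
    rw [Set.mem_Ico] at h1
    have := hlowAll p
    omega
  have hembT := ψofT_embed T
  have hψ0 : ψofT T 0 = 0 := ψofT_zero T
  have hid : ∀ n, n ≤ w.length → ψofT T n = n := fun n hn =>
    ψofT_id (fun m hm => by have := hTlow m hm; omega)
  obtain ⟨x, hx, hxl⟩ := hlL
  have hglue : glue el (rightRay x) ∈ X := by
    rw [← hxl, glue_eq_self]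
    exact hx
  have hzmem := glue_starRay_mem hX (sl := el) (sr := rightRay x) hembT embed_id
    (Or.inl hψ0) hglue
  refine ⟨map_some_mem_lang hX hwlang, starRay el (ψofT T),
    ⟨_, hzmem, leftRay_glue _ _⟩, ?_, ?_, ?_⟩
  · exact raySuffix_starRay hembT (fun n hn => hid n (by omega)) hsuf
  · apply Set.Subset.antisymm
    · have h2 := langL_subset_lang (Y := starShift X) hzmem
      rw [leftRay_glue] at h2
      exact h2
    · intro u hu
      rw [hU] at hu
      obtain ⟨n, rfl⟩ := hu
      exact (hspec n).2 T (hTn n)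
  · exact foll_star_eq_main hX hembT hψ0 hsuf (fun n hn => hid n (by omega)) hfoll.ge

end Main


theorem stmt19 [Finite A] (X : Set (ℤ → A)) (hX : IsSubshift X) :
    (HalfSynchronized X →
      HalfSynchronized (starShift X) ∧
      ∀ w : List A, HalfSyncWord X w → HalfSyncWord (starShift X) (w.map Option.some)) ∧
    (Synchronized X →
      Synchronized (starShift X) ∧
      ∀ w : List A, w ≠ [] → SyncWord X w → SyncWord (starShift X) (w.map Option.some)) := by
  constructor
  · intro hHS
    obtain ⟨hT, w₀, hw₀⟩ := hHS
    exact ⟨⟨transitive_star hX hT, w₀.map some, halfSyncWord_star hX hT hw₀⟩,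
      fun w hw => halfSyncWord_star hX hT hw⟩
  · intro hS
    obtain ⟨hT, w₀, hw₀⟩ := hS
    refine ⟨⟨transitive_star hX hT, ?_⟩, fun w hne hs => syncWord_star hX hne hs⟩
    obtain ⟨aa, ha⟩ := exists_cons_lang hw₀.1
    exact ⟨(aa :: w₀).map some, syncWord_star hX (by simp) (syncWord_extend hX hw₀ ha)⟩

end Paper
end
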